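/- The map Φ_B is a bijection between type B alternative tableaux of size n and type B linked partitions of {1,...,n}; moreover the labels of the unrestricted rows of T are exactly the labels of the origins and singletons of Φ_B(T). -/

import Mathlib

open Finset Polynomial
open scoped Classical

/-! ### Tree-like tableaux (grid model)
A cell is a pair (row index, column index), both 0-based.  A Ferrers diagram
is a finite lower set of cells.  A tree-like tableau of size `n` is a pair
`(F, P)` where `P` is the set of pointed cells of the diagram `F`. -/

def IsFerrersGrid (F : Finset (ℕ × ℕ)) : Prop :=
  ∀ p ∈ F, ∀ i j : ℕ, i ≤ p.1 → j ≤ p.2 → (i, j) ∈ F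

def IsTLT (F P : Finset (ℕ × ℕ)) : Prop :=
  F.Nonempty ∧ IsFerrersGrid F ∧ P ⊆ F ∧ (0, 0) ∈ P ∧
  (∀ p ∈ P, p ≠ (0, 0) →
    Xor' (∃ i < p.1, (i, p.2) ∈ P) (∃ j < p.2, (p.1, j) ∈ P)) ∧
  (∀ p ∈ F, ∃ q ∈ P, q.1 = p.1) ∧
  (∀ p ∈ F, ∃ q ∈ P, q.2 = p.2)

/-- The finite set of tree-like tableaux of size `n`. -/
noncomputable def TLT (n : ℕ) : Finset (Finset (ℕ × ℕ) × Finset (ℕ × ℕ)) :=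
  ((Finset.range n ×ˢ Finset.range n).powerset ×ˢ
    (Finset.range n ×ˢ Finset.range n).powerset).filter
    (fun T => IsTLT T.1 T.2 ∧ T.2.card = n)

/-- number of non-root points in the topmost row -/
noncomputable def topT (P : Finset (ℕ × ℕ)) : ℕ :=
  (P.filter (fun p => p.1 = 0 ∧ p.2 ≠ 0)).card
/-- number of non-root points in the leftmost column -/
noncomputable def leftT (P : Finset (ℕ × ℕ)) : ℕ :=
  (P.filter (fun p => p.2 = 0 ∧ p.1 ≠ 0)).card
/-- corners of a Ferrers diagram -/
noncomputable def cornersT (F : Finset (ℕ × ℕ)) : Finset (ℕ × ℕ) :=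
  F.filter (fun p => (p.1 + 1, p.2) ∉ F ∧ (p.1, p.2 + 1) ∉ F)
/-- non-occupied corners -/
noncomputable def nocT (F P : Finset (ℕ × ℕ)) : ℕ :=
  ((cornersT F).filter (fun p => p ∉ P)).card
/-- occupied corners -/
noncomputable def ocT (F P : Finset (ℕ × ℕ)) : ℕ :=
  ((cornersT F).filter (fun p => p ∈ P)).card
/-- symmetric (invariant under reflection across the main diagonal) -/
def IsSymTLT (F P : Finset (ℕ × ℕ)) : Prop :=
  F.image Prod.swap = F ∧ P.image Prod.swap = P

/-! ### Alternative tableaux (border-label model)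
A Ferrers diagram of size `n` (empty rows and columns allowed) is encoded by
the set `C ⊆ {1,…,n}` of its column labels (labels of the south-east border
steps, read from north-east to south-west); the remaining labels are row
labels.  Row `r` and column `c` intersect in a cell (written `(r, c)`)
exactly when `r < c`.  Inside a row, cells further to the left have *larger*
column labels; inside a column, cells further up have *smaller* row labels.
An alternative tableau is `(C, L, U)` where `L` (resp. `U`) is the set of
cells containing a left (resp. up) arrow. -/

def IsAT (n : ℕ) (C : Finset ℕ) (L U : Finset (ℕ × ℕ)) : Prop :=
  C ⊆ Finset.Icc 1 n ∧ Disjoint L U ∧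
  (∀ p ∈ L ∪ U, p.1 ∈ Finset.Icc 1 n ∧ p.1 ∉ C ∧ p.2 ∈ C ∧ p.1 < p.2) ∧
  (∀ p ∈ L, ∀ c' : ℕ, p.2 < c' → (p.1, c') ∉ L ∪ U) ∧
  (∀ p ∈ U, ∀ r' : ℕ, r' < p.1 → (r', p.2) ∉ L ∪ U)

/-- the finite set of alternative tableaux of size `n` -/
noncomputable def ATset (n : ℕ) :
    Finset (Finset ℕ × Finset (ℕ × ℕ) × Finset (ℕ × ℕ)) :=
  ((Finset.Icc 1 n).powerset ×ˢ
    ((Finset.Icc 1 n ×ˢ Finset.Icc 1 n).powerset ×ˢ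
      (Finset.Icc 1 n ×ˢ Finset.Icc 1 n).powerset)).filter
    (fun T => IsAT n T.1 T.2.1 T.2.2)

/-- alternative tableaux of size `n` in which every column contains an up arrow -/
noncomputable def ATstar (n : ℕ) :
    Finset (Finset ℕ × Finset (ℕ × ℕ) × Finset (ℕ × ℕ)) :=
  (ATset n).filter (fun T => ∀ c ∈ T.1, ∃ p ∈ T.2.2, p.2 = c)

/-- label of the topmost row -/
noncomputable def topRowA (n : ℕ) (C : Finset ℕ) : ℕ :=
  WithTop.untopD 0 ((Finset.Icc 1 n \ C).min)
/-- number of arrows in the topmost row -/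
noncomputable def topA (n : ℕ) (C : Finset ℕ) (L U : Finset (ℕ × ℕ)) : ℕ :=
  ((L ∪ U).filter (fun p => p.1 = topRowA n C)).card
/-- number of unrestricted rows (rows with no left arrow) -/
noncomputable def urrA (n : ℕ) (C : Finset ℕ) (L : Finset (ℕ × ℕ)) : ℕ :=
  ((Finset.Icc 1 n \ C).filter (fun r => ∀ p ∈ L, p.1 ≠ r)).card
/-- number of non-occupied corners (the corners are exactly the cells `(c-1, c)`
with `c` a column label and `c-1` a row label) -/
noncomputable def nocA (n : ℕ) (C : Finset ℕ) (L U : Finset (ℕ × ℕ)) : ℕ :=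
  (C.filter (fun c => c - 1 ∈ Finset.Icc 1 n \ C ∧ (c - 1, c) ∉ L ∪ U)).card
/-- symmetric alternative tableau of size `2n` (reflection across the main
diagonal exchanges border label `k` with `2n+1-k`, rows with columns and
left arrows with up arrows) -/
def IsSymAT (n : ℕ) (C : Finset ℕ) (L U : Finset (ℕ × ℕ)) : Prop :=
  (∀ k ∈ Finset.Icc 1 (2 * n), (k ∈ C ↔ (2 * n + 1 - k) ∉ C)) ∧
  (∀ r c : ℕ, (r, c) ∈ L ↔ (2 * n + 1 - c, 2 * n + 1 - r) ∈ U)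

/-! ### Linked partitions (linear representation / arc model)
A linked partition of `{1,…,n}` is identified with its set of arcs `(i, j)`,
`i < j`: each vertex is the right-hand endpoint of at most one arc. -/

def IsLP (n : ℕ) (A : Finset (ℕ × ℕ)) : Prop :=
  (∀ p ∈ A, 1 ≤ p.1 ∧ p.1 < p.2 ∧ p.2 ≤ n) ∧
  (∀ p ∈ A, ∀ q ∈ A, p.2 = q.2 → p.1 = q.1)

noncomputable def LP (n : ℕ) : Finset (Finset (ℕ × ℕ)) :=
  ((Finset.Icc 1 n ×ˢ Finset.Icc 1 n).powerset).filter (IsLP n)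

/-- number of origins plus singletons (= vertices with no incoming arc) -/
noncomputable def osL (n : ℕ) (A : Finset (ℕ × ℕ)) : ℕ :=
  ((Finset.Icc 1 n).filter (fun j => ∀ p ∈ A, p.2 ≠ j)).card
/-- number of arcs with left-hand endpoint `1` -/
noncomputable def oneL (A : Finset (ℕ × ℕ)) : ℕ :=
  (A.filter (fun p => p.1 = 1)).card
/-- a destination: only a right-hand endpoint -/
def IsDest (A : Finset (ℕ × ℕ)) (j : ℕ) : Prop :=
  (∃ p ∈ A, p.2 = j) ∧ ∀ p ∈ A, p.1 ≠ j

/-- consecutive pairs of a finite set of naturals -/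
noncomputable def consecPairs (S : Finset ℕ) : Finset (ℕ × ℕ) :=
  (S ×ˢ S).filter (fun p => p.1 < p.2 ∧ ∀ k ∈ S, ¬(p.1 < k ∧ k < p.2))

/-- the set of row labels of cells of column `c` containing an arrow -/
noncomputable def colRows (L U : Finset (ℕ × ℕ)) (c : ℕ) : Finset ℕ :=
  ((L ∪ U).filter (fun p => p.2 = c)).image Prod.fst

/-- the map `Φ`: for each column `j`, with the up arrow in row `i₁` and the
left arrows in rows `i₂ < … < i_t`, draw the arcs `(i₁,i₂), …, (i_{t-1},i_t), (i_t, j)`,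
i.e. the consecutive pairs of `{i₁,…,i_t, j}`. -/
noncomputable def Phi (T : Finset ℕ × Finset (ℕ × ℕ) × Finset (ℕ × ℕ)) :
    Finset (ℕ × ℕ) :=
  T.1.biUnion (fun c => consecPairs (insert c (colRows T.2.1 T.2.2 c)))

/-! ### Type B alternative tableaux
Encoded by `(C, L, U)` with `C ⊆ Icc 1 n` the set of column labels of the
subdiagram; rows of the shifted diagram are labelled by
`(Icc 1 n \ C) ∪ (-C)`, rows higher up having smaller labels.  Row `x` and
column `c` intersect in a cell exactly when (`x > 0` and `x < c`) or
(`x < 0` and `-x ≤ c`); the cell `(-c, c)` is the diagonal cell of row `-c`. -/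

def cellB (n : ℕ) (C : Finset ℤ) (x c : ℤ) : Prop :=
  c ∈ C ∧ ((1 ≤ x ∧ x ≤ (n : ℤ) ∧ x ∉ C ∧ x < c) ∨ (x < 0 ∧ -x ∈ C ∧ -x ≤ c))

def IsATB (n : ℕ) (C : Finset ℤ) (L U : Finset (ℤ × ℤ)) : Prop :=
  C ⊆ Finset.Icc 1 (n : ℤ) ∧ Disjoint L U ∧
  (∀ p ∈ L ∪ U, p.2 ∈ C ∧
    ((1 ≤ p.1 ∧ p.1 ≤ (n : ℤ) ∧ p.1 ∉ C ∧ p.1 < p.2) ∨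
      (p.1 < 0 ∧ -p.1 ∈ C ∧ -p.1 < p.2))) ∧
  (∀ p ∈ L, ∀ c' : ℤ, p.2 < c' → (p.1, c') ∉ L ∪ U) ∧
  (∀ p ∈ U, ∀ x' : ℤ, x' < p.1 → (x', p.2) ∉ L ∪ U) ∧
  (∀ i ∈ C, (∃ p ∈ U, p.2 = i) → ∀ c' : ℤ, (-i, c') ∉ L ∪ U)

noncomputable def ATB (n : ℕ) :
    Finset (Finset ℤ × Finset (ℤ × ℤ) × Finset (ℤ × ℤ)) :=
  ((Finset.Icc (1 : ℤ) (n : ℤ)).powerset ×ˢ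
    ((Finset.Icc (-(n : ℤ)) (n : ℤ) ×ˢ Finset.Icc (1 : ℤ) (n : ℤ)).powerset ×ˢ
      (Finset.Icc (-(n : ℤ)) (n : ℤ) ×ˢ Finset.Icc (1 : ℤ) (n : ℤ)).powerset)).filter
    (fun T => IsATB n T.1 T.2.1 T.2.2)

/-- the row labels of a type B alternative tableau -/
noncomputable def rowsB (n : ℕ) (C : Finset ℤ) : Finset ℤ :=
  (Finset.Icc (1 : ℤ) (n : ℤ) \ C) ∪ C.image (fun c => -c)

/-- number of unrestricted rows: row `x` is unrestricted when it contains no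
left arrow and column `|x|` (if it exists) contains no up arrow -/
noncomputable def urrB (n : ℕ) (C : Finset ℤ) (L U : Finset (ℤ × ℤ)) : ℕ :=
  ((rowsB n C).filter (fun x => (∀ p ∈ L, p.1 ≠ x) ∧ ∀ p ∈ U, p.2 ≠ |x|)).card

/-- the corners of the shifted Ferrers diagram -/
noncomputable def cornersB (n : ℕ) (C : Finset ℤ) : Finset (ℤ × ℤ) :=
  (Finset.Icc (-(n : ℤ)) (n : ℤ) ×ˢ Finset.Icc (1 : ℤ) (n : ℤ)).filter
    (fun p => cellB n C p.1 p.2 ∧ (∀ x' : ℤ, p.1 < x' → ¬ cellB n C x' p.2) ∧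
      (∀ c' : ℤ, c' < p.2 → ¬ cellB n C p.1 c'))

/-- number of non-occupied diagonal corners -/
noncomputable def nocDiagB (n : ℕ) (C : Finset ℤ) (L U : Finset (ℤ × ℤ)) : ℕ :=
  ((cornersB n C).filter (fun p => p.1 = -p.2 ∧ p ∉ L ∪ U)).card
/-- number of non-occupied non-diagonal corners -/
noncomputable def nocOffB (n : ℕ) (C : Finset ℤ) (L U : Finset (ℤ × ℤ)) : ℕ :=
  ((cornersB n C).filter (fun p => p.1 ≠ -p.2 ∧ p ∉ L ∪ U)).card

/-! ### Type B linked partitions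
A pair `(V, A)`: for each `i ∈ {1,…,n}` exactly one of `i, -i` belongs to
the vertex set `V`; `A` is the set of arcs `(x, y)`, `x < y`, with each
vertex the right-hand endpoint of at most one arc. -/

def IsLPB (n : ℕ) (V : Finset ℤ) (A : Finset (ℤ × ℤ)) : Prop :=
  (∀ v ∈ V, 1 ≤ |v| ∧ |v| ≤ (n : ℤ)) ∧
  (∀ i ∈ Finset.Icc (1 : ℤ) (n : ℤ), ((i ∈ V ∧ -i ∉ V) ∨ (-i ∈ V ∧ i ∉ V))) ∧
  (∀ p ∈ A, p.1 ∈ V ∧ p.2 ∈ V ∧ p.1 < p.2) ∧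
  (∀ p ∈ A, ∀ q ∈ A, p.2 = q.2 → p.1 = q.1)

noncomputable def LPB (n : ℕ) : Finset (Finset ℤ × Finset (ℤ × ℤ)) :=
  ((Finset.Icc (-(n : ℤ)) (n : ℤ)).powerset ×ˢ
    (Finset.Icc (-(n : ℤ)) (n : ℤ) ×ˢ Finset.Icc (-(n : ℤ)) (n : ℤ)).powerset).filter
    (fun T => IsLPB n T.1 T.2)

/-- number of origins plus singletons (= vertices with no incoming arc) -/
noncomputable def osB (V : Finset ℤ) (A : Finset (ℤ × ℤ)) : ℕ :=
  (V.filter (fun v => ∀ p ∈ A, p.2 ≠ v)).card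

/-- a legal destination: `j` is only a right-hand endpoint, and its incoming
arc `(a, j)` satisfies `|a| < |j|` -/
def IsLegalDestB (A : Finset (ℤ × ℤ)) (j : ℤ) : Prop :=
  (∃ p ∈ A, p.2 = j ∧ |p.1| < |j|) ∧ ∀ p ∈ A, p.1 ≠ j

/-- consecutive pairs of a finite set of integers -/
noncomputable def consecPairsZ (S : Finset ℤ) : Finset (ℤ × ℤ) :=
  (S ×ˢ S).filter (fun p => p.1 < p.2 ∧ ∀ k ∈ S, ¬(p.1 < k ∧ k < p.2))

/-- row labels of cells of column `c` containing an arrow -/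
noncomputable def colRowsB (L U : Finset (ℤ × ℤ)) (c : ℤ) : Finset ℤ :=
  ((L ∪ U).filter (fun p => p.2 = c)).image Prod.fst

/-- column `c` contains an up arrow -/
def HasUp (U : Finset (ℤ × ℤ)) (c : ℤ) : Prop := ∃ p ∈ U, p.2 = c

/-- the map `Φ_B`: columns with an up arrow give positive vertices and chains
of arcs through their arrows (consecutive pairs of the arrow rows together
with the column label); columns without an up arrow give negative vertices
`-j` and arcs from `-j` to each row containing a left arrow of that column;
rows give positive vertices. -/
noncomputable def PhiB (n : ℕ) (T : Finset ℤ × Finset (ℤ × ℤ) × Finset (ℤ × ℤ)) :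
    Finset ℤ × Finset (ℤ × ℤ) :=
  ((Finset.Icc (1 : ℤ) (n : ℤ) \ T.1) ∪ T.1.filter (fun c => HasUp T.2.2 c) ∪
      (T.1.filter (fun c => ¬ HasUp T.2.2 c)).image (fun c => -c),
    (T.1.filter (fun c => HasUp T.2.2 c)).biUnion
        (fun c => consecPairsZ (insert c (colRowsB T.2.1 T.2.2 c))) ∪
      (T.1.filter (fun c => ¬ HasUp T.2.2 c)).biUnion
        (fun c => (colRowsB T.2.1 T.2.2 c).image (fun r => (-c, r))))


namespace PB

def Arc (A : Finset (ℤ × ℤ)) (x y : ℤ) : Prop := (x, y) ∈ A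

noncomputable def psrc (A : Finset (ℤ × ℤ)) (y : ℤ) : ℤ :=
  WithTop.untopD 0 (((A.filter (fun p => p.2 = y)).image Prod.fst).min)

lemma psrc_eq {A : Finset (ℤ × ℤ)} (hu : ∀ p ∈ A, ∀ q ∈ A, p.2 = q.2 → p.1 = q.1)
    {x y : ℤ} (h : (x, y) ∈ A) : psrc A y = x := by
  have : (A.filter (fun p => p.2 = y)).image Prod.fst = {x} := by
    ext z
    simp only [Finset.mem_image, Finset.mem_filter, Finset.mem_singleton]
    constructor
    · rintro ⟨p, ⟨hp, hp2⟩, rfl⟩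
      exact hu p hp (_, y) h hp2
    · rintro rfl; exact ⟨(_, y), ⟨h, rfl⟩, rfl⟩
  simp [psrc, this]

lemma mem_consecPairsZ {S : Finset ℤ} {a b : ℤ} :
    (a, b) ∈ consecPairsZ S ↔ a ∈ S ∧ b ∈ S ∧ a < b ∧ ∀ k ∈ S, ¬(a < k ∧ k < b) := by
  simp [consecPairsZ, Finset.mem_filter, Finset.mem_product, and_assoc]

lemma consec_left_unique {S : Finset ℤ} {a a' b : ℤ}
    (h : (a, b) ∈ consecPairsZ S) (h' : (a', b) ∈ consecPairsZ S) : a = a' := by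
  rw [mem_consecPairsZ] at h h'
  by_contra hne
  rcases lt_or_gt_of_ne hne with hlt | hlt
  · exact h.2.2.2 a' h'.1 ⟨hlt, h'.2.2.1⟩
  · exact h'.2.2.2 a h.1 ⟨hlt, h.2.2.1⟩

lemma consec_of_maxbelow {S : Finset ℤ} {a b : ℤ} (ha : a ∈ S) (hb : b ∈ S)
    (hab : a < b) (hmax : ∀ k ∈ S, k < b → k ≤ a) : (a, b) ∈ consecPairsZ S := by
  rw [mem_consecPairsZ]
  exact ⟨ha, hb, hab, fun k hk ⟨h1, h2⟩ => absurd (hmax k hk h2) (not_le.2 h1)⟩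

/-- from any element of `S` one can reach any larger element of `S` by
consecutive steps, provided all consecutive pairs of `S` are arcs. -/
lemma reach_of_chain {A : Finset (ℤ × ℤ)} {S : Finset ℤ}
    (hS : ∀ p ∈ consecPairsZ S, p ∈ A) :
    ∀ a ∈ S, ∀ b ∈ S, a < b → Relation.TransGen (Arc A) a b := by
  intro a ha b hb hab
  have hgen : ∀ m : ℕ, ∀ a ∈ S, a < b → (b - a).toNat ≤ m → Relation.TransGen (Arc A) a b := by
    intro m
    induction m with
    | zero => intro a _ hab h0; omega
    | succ m ih =>
      intro a ha hab hm
      have hne : (S.filter (fun z => a < z)).Nonempty := ⟨b, by simp [hb, hab]⟩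
      set a' := (S.filter (fun z => a < z)).min' hne with ha'
      have ha'S : a' ∈ S ∧ a < a' := by
        have h := Finset.min'_mem _ hne
        rw [Finset.mem_filter] at h
        exact h
      have harc : Arc A a a' := by
        apply hS
        apply consec_of_maxbelow ha ha'S.1 ha'S.2
        intro k hk hka'
        by_contra hak
        push_neg at hak
        have : a' ≤ k := Finset.min'_le _ k (by simp [hk, hak])
        omega
      have ha'b : a' ≤ b := Finset.min'_le _ b (by simp [hb, hab])
      rcases eq_or_lt_of_le ha'b with rfl | hlt
      · exact Relation.TransGen.single harc
      · exact Relation.TransGen.head harc (ih a' ha'S.1 hlt (by omega))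
  exact hgen (b - a).toNat a ha hab le_rfl

lemma rtg_le {A : Finset (ℤ × ℤ)} (hA : ∀ p ∈ A, p.1 < p.2) {x y : ℤ}
    (h : Relation.ReflTransGen (Arc A) x y) : x ≤ y := by
  induction h with
  | refl => exact le_refl x
  | tail _ hbc ih => exact le_of_lt (lt_of_le_of_lt ih (hA _ hbc))

lemma tg_lt {A : Finset (ℤ × ℤ)} (hA : ∀ p ∈ A, p.1 < p.2) {x y : ℤ}
    (h : Relation.TransGen (Arc A) x y) : x < y := by
  induction h with
  | single h => exact hA _ h
  | tail _ hbc ih => exact lt_trans ih (hA _ hbc)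

/-- comparability of two vertices reaching the same vertex, for a relation
with unique in-neighbours. -/
lemma rtg_comparable {A : Finset (ℤ × ℤ)}
    (hu : ∀ p ∈ A, ∀ q ∈ A, p.2 = q.2 → p.1 = q.1) {x y z : ℤ}
    (hx : Relation.ReflTransGen (Arc A) x z) (hy : Relation.ReflTransGen (Arc A) y z) :
    Relation.ReflTransGen (Arc A) x y ∨ Relation.ReflTransGen (Arc A) y x := by
  induction hx using Relation.ReflTransGen.head_induction_on with
  | refl => right; exact hy
  | head hxw hwz ih =>
    rename_i x' w
    rcases ih with h | h
    · left; exact Relation.ReflTransGen.head hxw h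
    · rcases Relation.ReflTransGen.cases_tail h with rfl | ⟨v, hyv, hvw⟩
      · left; exact Relation.ReflTransGen.single hxw
      · have hvx : v = x' := hu (v, w) hvw (x', w) hxw rfl
        subst hvx
        right; exact hyv

/-- the last step of a nontrivial reflexive-transitive chain -/
lemma rtg_last {A : Finset (ℤ × ℤ)} {x y : ℤ} (h : Relation.ReflTransGen (Arc A) x y)
    (hne : x ≠ y) : ∃ p, Relation.ReflTransGen (Arc A) x p ∧ (p, y) ∈ A := by
  rcases Relation.ReflTransGen.cases_tail h with rfl | ⟨p, hp, hpy⟩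
  · exact absurd rfl hne
  · exact ⟨p, hp, hpy⟩

end PB

-- continuation: inverse map definitions (to be appended after gen)
namespace PB

noncomputable def tgts (A : Finset (ℤ × ℤ)) : Finset ℤ := A.image Prod.snd

lemma mem_tgts {A : Finset (ℤ × ℤ)} {y : ℤ} : y ∈ tgts A ↔ ∃ x, (x, y) ∈ A := by
  constructor
  · rintro h
    rw [tgts, Finset.mem_image] at h
    obtain ⟨p, hp, rfl⟩ := h
    exact ⟨p.1, hp⟩
  · rintro ⟨x, hx⟩
    rw [tgts, Finset.mem_image]
    exact ⟨(x, y), hx, rfl⟩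

noncomputable def CposF (n : ℕ) (A : Finset (ℤ × ℤ)) : Finset ℤ :=
  (Finset.Icc (1 : ℤ) (n : ℤ)).filter (fun c => IsLegalDestB A c)

noncomputable def colSet (n : ℕ) (A : Finset (ℤ × ℤ)) (y : ℤ) : Finset ℤ :=
  ((CposF n A).filter (fun c => Relation.TransGen (Arc A) y c)) ∪
    ((A.filter (fun p => p.2 = y)).image (fun p => -p.1))

noncomputable def col (n : ℕ) (A : Finset (ℤ × ℤ)) (y : ℤ) : ℤ :=
  if y ∈ CposF n A then y
  else if h : (colSet n A y).Nonempty then (colSet n A y).max' h else 0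

noncomputable def cls (n : ℕ) (A : Finset (ℤ × ℤ)) (c : ℤ) : Finset ℤ :=
  (tgts A).filter (fun y => col n A y = c)

noncomputable def mcls (n : ℕ) (A : Finset (ℤ × ℤ)) (c : ℤ) : ℤ :=
  if h : (cls n A c).Nonempty then (cls n A c).min' h else 0

noncomputable def PsiB (n : ℕ) (P : Finset ℤ × Finset (ℤ × ℤ)) :
    Finset ℤ × Finset (ℤ × ℤ) × Finset (ℤ × ℤ) :=
  (CposF n P.2 ∪ (Finset.Icc (1 : ℤ) (n : ℤ)).filter (fun c => -c ∈ P.1),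
   ((tgts P.2).filter (fun y => y ∉ CposF n P.2)).image (fun y => (y, col n P.2 y)),
   (CposF n P.2).image (fun c => (psrc P.2 (mcls n P.2 c), c)))

/-- value of `col` at a non-`Cpos` target when we know a member and an upper bound -/
lemma col_eq_of {n : ℕ} {A : Finset (ℤ × ℤ)} {y c : ℤ} (hy : y ∉ CposF n A)
    (hmem : c ∈ colSet n A y) (hub : ∀ z ∈ colSet n A y, z ≤ c) : col n A y = c := by
  rw [col, if_neg hy, dif_pos ⟨c, hmem⟩]
  exact le_antisymm (Finset.max'_le _ _ _ hub) (Finset.le_max' _ _ hmem)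

lemma col_mem_colSet {n : ℕ} {A : Finset (ℤ × ℤ)} {y : ℤ} (hy : y ∉ CposF n A)
    (h : (colSet n A y).Nonempty) : col n A y ∈ colSet n A y := by
  rw [col, if_neg hy, dif_pos h]; exact Finset.max'_mem _ _

lemma le_col {n : ℕ} {A : Finset (ℤ × ℤ)} {y z : ℤ} (hy : y ∉ CposF n A)
    (hz : z ∈ colSet n A y) : z ≤ col n A y := by
  rw [col, if_neg hy, dif_pos ⟨z, hz⟩]; exact Finset.le_max' _ _ hz

end PB

namespace PB
section Forward

variable {n : ℕ} {C : Finset ℤ} {L U : Finset (ℤ × ℤ)}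

/-- cells facts -/
lemma f_cell (hT : IsATB n C L U) {p : ℤ × ℤ} (hp : p ∈ L ∪ U) :
    p.2 ∈ C ∧ |p.1| < p.2 ∧ (0 < p.1 → p.1 ∉ C) ∧ (p.1 < 0 → -p.1 ∈ C) ∧ p.1 ≠ 0 := by
  obtain ⟨hC, hdisj, hcell, hL4, hU5, h6⟩ := hT
  obtain ⟨h2, hca⟩ := hcell p hp
  rcases hca with ⟨h1, _, hnC, hlt⟩ | ⟨hneg, hmem, hlt⟩
  · exact ⟨h2, by rw [abs_of_pos (by omega)]; omega,
      fun _ => hnC, fun h => absurd h (by omega), by omega⟩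
  · exact ⟨h2, by rw [abs_of_neg hneg]; omega,
      fun h => absurd h (by omega), fun _ => hmem, by omega⟩

lemma C_pos (hT : IsATB n C L U) {c : ℤ} (hc : c ∈ C) : 1 ≤ c ∧ c ≤ (n : ℤ) := by
  have := hT.1 hc; rw [Finset.mem_Icc] at this; exact this

lemma mem_colRowsB {r c : ℤ} : r ∈ colRowsB L U c ↔ (r, c) ∈ L ∪ U := by
  rw [colRowsB, Finset.mem_image]
  constructor
  · rintro ⟨p, hp, rfl⟩
    rw [Finset.mem_filter] at hp
    obtain ⟨hp1, hp2⟩ := hp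
    rwa [show (p.1, c) = p by rw [← hp2]]
  · intro h; exact ⟨(r, c), by simp [h], rfl⟩

/-- the up arrow of a column with an up arrow is at its minimal row,
and all other arrows are left arrows -/
lemma up_min (hT : IsATB n C L U) {c : ℤ} (hc : HasUp U c) :
    ∃ u, (u, c) ∈ U ∧ u ∈ colRowsB L U c ∧ (∀ r ∈ colRowsB L U c, u ≤ r) ∧
      (∀ r ∈ colRowsB L U c, r ≠ u → (r, c) ∈ L) := by
  obtain ⟨p, hp, hp2⟩ := hc
  obtain ⟨u, cu⟩ : ∃ u, p = (u, c) := ⟨p.1, by rw [← hp2]⟩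
  subst cu
  have hu : (u, c) ∈ U := hp
  have hmin : ∀ r ∈ colRowsB L U c, u ≤ r := by
    intro r hr
    rw [mem_colRowsB] at hr
    by_contra hlt
    exact hT.2.2.2.2.1 (u, c) hu r (by omega) hr
  refine ⟨u, hu, mem_colRowsB.2 (Finset.mem_union_right _ hu), hmin, ?_⟩
  intro r hr hne
  have hrc := mem_colRowsB.1 hr
  rcases Finset.mem_union.1 hrc with h | h
  · exact h
  · -- r would be a second up arrow; then r ≤ u as well, so r = u
    exfalso
    apply hne
    have : ∀ r' ∈ colRowsB L U c, r ≤ r' := by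
      intro r' hr'
      by_contra hlt
      exact hT.2.2.2.2.1 (r, c) h r' (by omega) (mem_colRowsB.1 hr')
    exact le_antisymm (this u (mem_colRowsB.2 (Finset.mem_union_right _ hu))) (hmin r hr)

lemma noup_L (hT : IsATB n C L U) {c r : ℤ} (hc : ¬ HasUp U c)
    (hr : r ∈ colRowsB L U c) : (r, c) ∈ L := by
  rcases Finset.mem_union.1 (mem_colRowsB.1 hr) with h | h
  · exact h
  · exact absurd ⟨(r, c), h, rfl⟩ hc

lemma L_max (hT : IsATB n C L U) {y c c' : ℤ} (h : (y, c) ∈ L)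
    (h' : (y, c') ∈ L ∪ U) : c' ≤ c := by
  by_contra hlt
  exact hT.2.2.2.1 (y, c) h c' (by omega) h'

lemma L_unique (hT : IsATB n C L U) {y c c' : ℤ} (h : (y, c) ∈ L)
    (h' : (y, c') ∈ L) : c = c' :=
  le_antisymm (L_max hT h' (Finset.mem_union_left _ h)) (L_max hT h (Finset.mem_union_left _ h'))

lemma row_neg_noUp (hT : IsATB n C L U) {p : ℤ × ℤ} (hp : p ∈ L ∪ U) (hneg : p.1 < 0) :
    ¬ HasUp U (-p.1) := by
  rintro ⟨q, hq, hq2⟩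
  have h1 : -p.1 ∈ C := (f_cell hT hp).2.2.2.1 hneg
  exact hT.2.2.2.2.2 (-p.1) h1 ⟨q, hq, hq2⟩ p.2 (by rwa [neg_neg, Prod.mk.eta])

end Forward
end PB

namespace PB
section Forward2

variable {n : ℕ} {C : Finset ℤ} {L U : Finset (ℤ × ℤ)}

lemma memA {x y : ℤ} :
    (x, y) ∈ (PhiB n (C, L, U)).2 ↔
      ∃ c ∈ C, (HasUp U c ∧ (x, y) ∈ consecPairsZ (insert c (colRowsB L U c))) ∨
        (¬ HasUp U c ∧ x = -c ∧ y ∈ colRowsB L U c) := by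
  rw [PhiB]
  simp only [Finset.mem_union, Finset.mem_biUnion, Finset.mem_filter, Finset.mem_image]
  constructor
  · rintro (⟨c, ⟨hc, hup⟩, hp⟩ | ⟨c, ⟨hc, hup⟩, r, hr, heq⟩)
    · exact ⟨c, hc, Or.inl ⟨hup, hp⟩⟩
    · refine ⟨c, hc, Or.inr ⟨hup, ?_, ?_⟩⟩
      · exact (congrArg Prod.fst heq).symm
      · have : r = y := congrArg Prod.snd heq
        rwa [← this]
  · rintro ⟨c, hc, ⟨hup, hp⟩ | ⟨hup, rfl, hy⟩⟩
    · exact Or.inl ⟨c, ⟨hc, hup⟩, hp⟩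
    · exact Or.inr ⟨c, ⟨hc, hup⟩, y, hy, rfl⟩

lemma memV {v : ℤ} :
    v ∈ (PhiB n (C, L, U)).1 ↔
      (1 ≤ v ∧ v ≤ (n : ℤ) ∧ v ∉ C) ∨ (v ∈ C ∧ HasUp U v) ∨
        (∃ c ∈ C, ¬ HasUp U c ∧ v = -c) := by
  rw [PhiB]
  simp only [Finset.mem_union, Finset.mem_sdiff, Finset.mem_Icc, Finset.mem_filter,
    Finset.mem_image]
  constructor
  · rintro ((⟨⟨h1, h2⟩, h3⟩ | ⟨h1, h2⟩) | ⟨c, ⟨hc, hup⟩, heq⟩)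
    · exact Or.inl ⟨h1, h2, h3⟩
    · exact Or.inr (Or.inl ⟨h1, h2⟩)
    · exact Or.inr (Or.inr ⟨c, hc, hup, heq.symm⟩)
  · rintro (⟨h1, h2, h3⟩ | ⟨h1, h2⟩ | ⟨c, hc, hup, rfl⟩)
    · exact Or.inl (Or.inl ⟨⟨h1, h2⟩, h3⟩)
    · exact Or.inl (Or.inr ⟨h1, h2⟩)
    · exact Or.inr ⟨c, ⟨hc, hup⟩, rfl⟩

/-- rows of a column are strictly between `-c` and `c` in absolute value -/
lemma row_abs (hT : IsATB n C L U) {r c : ℤ} (hr : r ∈ colRowsB L U c) : |r| < c :=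
  (f_cell hT (mem_colRowsB.1 hr)).2.1

/-- every row with an arrow is a vertex -/
lemma row_mem_V (hT : IsATB n C L U) {r c : ℤ} (hr : r ∈ colRowsB L U c) :
    r ∈ (PhiB n (C, L, U)).1 := by
  rw [memV]
  have hcell := f_cell hT (mem_colRowsB.1 hr)
  rcases lt_trichotomy r 0 with hneg | hzero | hpos
  · refine Or.inr (Or.inr ⟨-r, hcell.2.2.2.1 hneg, ?_, by ring⟩)
    exact row_neg_noUp hT (mem_colRowsB.1 hr) hneg
  · exact absurd hzero hcell.2.2.2.2
  · left
    have hc2 : c ≤ (n : ℤ) := (C_pos hT hcell.1).2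
    have := hcell.2.1; rw [abs_of_pos hpos] at this
    exact ⟨by omega, by omega, hcell.2.2.1 hpos⟩

/-- sources of arcs are not (positive) column labels -/
lemma arc_src_notC (hT : IsATB n C L U) {x y : ℤ}
    (h : (x, y) ∈ (PhiB n (C, L, U)).2) : x ∉ C := by
  rcases memA.1 h with ⟨c, hc, ⟨hup, hp⟩ | ⟨hup, rfl, hy⟩⟩
  · rw [mem_consecPairsZ] at hp
    obtain ⟨hx, hy', hlt, _⟩ := hp
    have hyc : y ≤ c := by
      rcases Finset.mem_insert.1 hy' with rfl | h'
      · exact le_refl _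
      · exact le_of_lt (lt_of_abs_lt (row_abs hT h'))
    have hxR : x ∈ colRowsB L U c := by
      rcases Finset.mem_insert.1 hx with rfl | h'
      · omega
      · exact h'
    intro hxC
    have h1 := (C_pos hT hxC).1
    exact (f_cell hT (mem_colRowsB.1 hxR)).2.2.1 (by omega) hxC
  · intro hxC
    have h1 := (C_pos hT hxC).1
    have h2 := (C_pos hT hc).1
    omega

/-- arcs increase -/
lemma arc_lt (hT : IsATB n C L U) {p : ℤ × ℤ}
    (h : p ∈ (PhiB n (C, L, U)).2) : p.1 < p.2 := by
  obtain ⟨x, y⟩ := p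
  rcases memA.1 h with ⟨c, hc, ⟨hup, hp⟩ | ⟨hup, rfl, hy⟩⟩
  · exact (mem_consecPairsZ.1 hp).2.2.1
  · simpa using neg_lt_of_abs_lt (row_abs hT hy)

/-- arc endpoints are vertices -/
lemma arc_mem_V (hT : IsATB n C L U) {x y : ℤ}
    (h : (x, y) ∈ (PhiB n (C, L, U)).2) :
    x ∈ (PhiB n (C, L, U)).1 ∧ y ∈ (PhiB n (C, L, U)).1 := by
  rcases memA.1 h with ⟨c, hc, ⟨hup, hp⟩ | ⟨hup, rfl, hy⟩⟩
  · rw [mem_consecPairsZ] at hp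
    obtain ⟨hx, hy', hlt, _⟩ := hp
    have hstep : ∀ z ∈ insert c (colRowsB L U c), z ∈ (PhiB n (C, L, U)).1 := by
      intro z hz
      rcases Finset.mem_insert.1 hz with rfl | h'
      · exact memV.2 (Or.inr (Or.inl ⟨hc, hup⟩))
      · exact row_mem_V hT h'
    exact ⟨hstep x hx, hstep y hy'⟩
  · constructor
    · exact memV.2 (Or.inr (Or.inr ⟨c, hc, hup, rfl⟩))
    · exact row_mem_V hT hy

end Forward2
end PB

namespace PB
section Forward3

variable {n : ℕ} {C : Finset ℤ} {L U : Finset (ℤ × ℤ)}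

lemma c_not_row (hT : IsATB n C L U) {c : ℤ} : c ∉ colRowsB L U c := by
  intro h
  exact lt_irrefl c (lt_of_le_of_lt (le_abs_self c) (row_abs hT h))

/-- target characterization -/
lemma arc_tgt (hT : IsATB n C L U) {x y : ℤ} (h : (x, y) ∈ (PhiB n (C, L, U)).2) :
    (y ∈ C ∧ HasUp U y ∧ (x, y) ∈ consecPairsZ (insert y (colRowsB L U y))) ∨
      (∃ c ∈ C, (y, c) ∈ L ∧
        ((HasUp U c ∧ (x, y) ∈ consecPairsZ (insert c (colRowsB L U c))) ∨
          (¬ HasUp U c ∧ x = -c))) := by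
  rcases memA.1 h with ⟨c, hc, ⟨hup, hp⟩ | ⟨hup, rfl, hy⟩⟩
  · have hp' := mem_consecPairsZ.1 hp
    obtain ⟨hx, hy', hlt, hbet⟩ := hp'
    rcases Finset.mem_insert.1 hy' with rfl | hyR
    · exact Or.inl ⟨hc, hup, hp⟩
    · refine Or.inr ⟨c, hc, ?_, Or.inl ⟨hup, hp⟩⟩
      obtain ⟨u, huU, huR, humin, hother⟩ := up_min hT hup
      apply hother y hyR
      rintro rfl
      -- x < y and x ∈ insert c (R c) with y = min row: contradiction
      rcases Finset.mem_insert.1 hx with rfl | hxR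
      · exact absurd (lt_of_abs_lt (row_abs hT hyR)) (by omega)
      · exact absurd (humin x hxR) (by omega)
  · exact Or.inr ⟨c, hc, noup_L hT hup hy, Or.inr ⟨hup, rfl⟩⟩

/-- each vertex is the right endpoint of at most one arc -/
lemma tgt_unique (hT : IsATB n C L U) :
    ∀ p ∈ (PhiB n (C, L, U)).2, ∀ q ∈ (PhiB n (C, L, U)).2, p.2 = q.2 → p.1 = q.1 := by
  rintro ⟨x, y⟩ hp ⟨x', y'⟩ hq h2
  simp only at h2
  subst h2
  rcases arc_tgt hT hp with ⟨hyC, hyUp, hcp⟩ | ⟨c, hc, hyL, hcol⟩ <;>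
    rcases arc_tgt hT hq with ⟨hyC', hyUp', hcp'⟩ | ⟨c', hc', hyL', hcol'⟩
  · exact consec_left_unique hcp hcp'
  · exact absurd hyC ((f_cell hT (Finset.mem_union_left _ hyL')).2.2.1
      (by have := (C_pos hT hyC).1; omega))
  · exact absurd hyC' ((f_cell hT (Finset.mem_union_left _ hyL)).2.2.1
      (by have := (C_pos hT hyC').1; omega))
  · have hcc : c = c' := L_unique hT hyL hyL'
    subst hcc
    rcases hcol with ⟨hup, hcp⟩ | ⟨hup, rfl⟩ <;> rcases hcol' with ⟨hup', hcp'⟩ | ⟨hup', rfl⟩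
    · exact consec_left_unique hcp hcp'
    · exact absurd hup hup'
    · exact absurd hup' hup
    · rfl

/-- every up column receives an arc from a row of absolute value `< c` -/
lemma upcol_arc (hT : IsATB n C L U) {c : ℤ} (hc : c ∈ C) (hup : HasUp U c) :
    ∃ x, (x, c) ∈ (PhiB n (C, L, U)).2 ∧ |x| < c := by
  obtain ⟨u, huU, huR, humin, hother⟩ := up_min hT hup
  have hne : (colRowsB L U c).Nonempty := ⟨u, huR⟩
  set a := (colRowsB L U c).max' hne with ha
  have haR : a ∈ colRowsB L U c := Finset.max'_mem _ hne
  have hac : a < c := lt_of_abs_lt (row_abs hT haR)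
  refine ⟨a, ?_, row_abs hT haR⟩
  rw [memA]
  refine ⟨c, hc, Or.inl ⟨hup, ?_⟩⟩
  apply consec_of_maxbelow (Finset.mem_insert_of_mem haR) (Finset.mem_insert_self _ _) hac
  intro k hk hkc
  rcases Finset.mem_insert.1 hk with rfl | hkR
  · omega
  · exact Finset.le_max' _ _ hkR

/-- a row with a left arrow is the target of an arc -/
lemma L_target (hT : IsATB n C L U) {y c : ℤ} (hyL : (y, c) ∈ L) :
    ∃ x, (x, y) ∈ (PhiB n (C, L, U)).2 := by
  have hyR : y ∈ colRowsB L U c := mem_colRowsB.2 (Finset.mem_union_left _ hyL)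
  have hcC : c ∈ C := (f_cell hT (Finset.mem_union_left _ hyL)).1
  by_cases hup : HasUp U c
  · obtain ⟨u, huU, huR, humin, hother⟩ := up_min hT hup
    have hyu : y ≠ u := by
      rintro rfl
      exact Finset.disjoint_left.1 hT.2.1 hyL huU
    have huy : u < y := lt_of_le_of_ne (humin y hyR) (Ne.symm hyu)
    have hne : ((insert c (colRowsB L U c)).filter (fun z => z < y)).Nonempty :=
      ⟨u, by simp [Finset.mem_insert_of_mem huR, huy]⟩
    refine ⟨((insert c (colRowsB L U c)).filter (fun z => z < y)).max' hne, ?_⟩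
    rw [memA]
    refine ⟨c, hcC, Or.inl ⟨hup, ?_⟩⟩
    have hmem := Finset.max'_mem _ hne
    rw [Finset.mem_filter] at hmem
    apply consec_of_maxbelow hmem.1 (Finset.mem_insert_of_mem hyR) hmem.2
    intro k hk hky
    exact Finset.le_max' _ _ (by simp [hk, hky])
  · exact ⟨-c, memA.2 ⟨c, hcC, Or.inr ⟨hup, rfl, hyR⟩⟩⟩

/-- from any arrow of an up column one reaches the column vertex -/
lemma reach_colv (hT : IsATB n C L U) {y c : ℤ} (hy : (y, c) ∈ L ∪ U) (hup : HasUp U c) :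
    Relation.TransGen (Arc (PhiB n (C, L, U)).2) y c := by
  have hcC : c ∈ C := (f_cell hT hy).1
  have hyR : y ∈ colRowsB L U c := mem_colRowsB.2 hy
  apply reach_of_chain (S := insert c (colRowsB L U c))
  · intro p hp
    rw [show p = (p.1, p.2) from rfl, memA]
    exact ⟨c, hcC, Or.inl ⟨hup, by rwa [Prod.mk.eta]⟩⟩
  · exact Finset.mem_insert_of_mem hyR
  · exact Finset.mem_insert_self _ _
  · exact lt_of_abs_lt (row_abs hT hyR)

end Forward3
end PB

namespace PB
section Forward4

variable {n : ℕ} {C : Finset ℤ} {L U : Finset (ℤ × ℤ)}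

lemma phi_mem_LPB (hT : IsATB n C L U) : PhiB n (C, L, U) ∈ LPB n := by
  rw [LPB, Finset.mem_filter, Finset.mem_product, Finset.mem_powerset, Finset.mem_powerset]
  have habs : ∀ v ∈ (PhiB n (C, L, U)).1, 1 ≤ |v| ∧ |v| ≤ (n : ℤ) := by
    intro v hv
    rcases memV.1 hv with ⟨h1, h2, _⟩ | ⟨h1, _⟩ | ⟨c, hc, _, rfl⟩
    · rw [abs_of_pos (by omega)]; omega
    · obtain ⟨hc1, hc2⟩ := C_pos hT h1
      rw [abs_of_pos (by omega)]; omega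
    · obtain ⟨hc1, hc2⟩ := C_pos hT hc
      rw [abs_neg, abs_of_pos (by omega)]; omega
  refine ⟨⟨?_, ?_⟩, ?_, ?_, ?_, tgt_unique hT⟩
  · intro v hv
    have := habs v hv
    rw [Finset.mem_Icc]
    rcases abs_cases v with ⟨he, _⟩ | ⟨he, _⟩ <;> omega
  · intro p hp
    obtain ⟨hx, hy⟩ := arc_mem_V hT (show (p.1, p.2) ∈ _ by rwa [Prod.mk.eta])
    have h1 := habs _ hx
    have h2 := habs _ hy
    rw [Finset.mem_product, Finset.mem_Icc, Finset.mem_Icc]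
    constructor
    · rcases abs_cases p.1 with ⟨he, _⟩ | ⟨he, _⟩ <;> omega
    · rcases abs_cases p.2 with ⟨he, _⟩ | ⟨he, _⟩ <;> omega
  · exact habs
  · -- sign condition
    intro i hi
    rw [Finset.mem_Icc] at hi
    have hnegV : -i ∈ (PhiB n (C, L, U)).1 ↔ (i ∈ C ∧ ¬ HasUp U i) := by
      rw [memV]
      constructor
      · rintro (⟨h1, _, _⟩ | ⟨h1, _⟩ | ⟨c, hc, hup, he⟩)
        · omega
        · have := (C_pos hT h1).1; omega
        · have : c = i := by omega
          subst this; exact ⟨hc, hup⟩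
      · rintro ⟨h1, h2⟩
        exact Or.inr (Or.inr ⟨i, h1, h2, rfl⟩)
    by_cases hiC : i ∈ C
    · by_cases hup : HasUp U i
      · left
        refine ⟨memV.2 (Or.inr (Or.inl ⟨hiC, hup⟩)), ?_⟩
        rw [hnegV]; tauto
      · right
        refine ⟨hnegV.2 ⟨hiC, hup⟩, ?_⟩
        rw [memV]
        rintro (⟨_, _, h⟩ | ⟨_, h2⟩ | ⟨c, hc, _, he⟩)
        · exact h hiC
        · exact hup h2
        · have := (C_pos hT hc).1; omega
    · left
      refine ⟨memV.2 (Or.inl ⟨hi.1, hi.2, hiC⟩), ?_⟩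
      rw [hnegV]; tauto
  · intro p hp
    exact ⟨(arc_mem_V hT (show (p.1, p.2) ∈ _ by rwa [Prod.mk.eta])).1,
      (arc_mem_V hT (show (p.1, p.2) ∈ _ by rwa [Prod.mk.eta])).2, arc_lt hT hp⟩

lemma legal_iff (hT : IsATB n C L U) {c : ℤ} (hc1 : 1 ≤ c) (hc2 : c ≤ (n : ℤ)) :
    IsLegalDestB (PhiB n (C, L, U)).2 c ↔ c ∈ C ∧ HasUp U c := by
  constructor
  · rintro ⟨⟨p, hp, hp2, hpabs⟩, hnosrc⟩
    rcases arc_tgt hT (show (p.1, p.2) ∈ _ by rwa [Prod.mk.eta]) with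
        ⟨h1, h2, _⟩ | ⟨d, hd, hL, hcol⟩
    · rw [hp2] at h1 h2; exact ⟨h1, h2⟩
    · exfalso
      rw [hp2] at hL
      rcases hcol with ⟨hup, _⟩ | ⟨hup, he⟩
      · -- c has an outgoing arc, contradiction
        have hre := reach_colv hT (Finset.mem_union_left _ hL) hup
        obtain ⟨z, h, _⟩ := Relation.TransGen.head'_iff.1 hre
        exact hnosrc (c, z) h rfl
      · -- incoming arc from -d with d > |c|
        have hcd : c < d := by
          have := (f_cell hT (Finset.mem_union_left _ hL)).2.1
          rw [abs_of_pos (by omega)] at this; exact this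
        rw [he] at hpabs
        rw [abs_neg, abs_of_pos (by omega), abs_of_pos (by omega)] at hpabs
        omega
  · rintro ⟨hcC, hup⟩
    obtain ⟨x, hx, hxabs⟩ := upcol_arc hT hcC hup
    refine ⟨⟨(x, c), hx, rfl, by
      simpa [abs_of_pos (show (0:ℤ) < c by omega)] using hxabs⟩, ?_⟩
    rintro p hp rfl
    exact arc_src_notC hT (show (p.1, p.2) ∈ _ by rwa [Prod.mk.eta]) hcC

/-- bound on reachable up-columns -/
lemma reach_bound (hT : IsATB n C L U) {y c' : ℤ}
    (h : Relation.TransGen (Arc (PhiB n (C, L, U)).2) y c')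
    (hc' : c' ∈ C) (hup' : HasUp U c') :
    ∃ d, (((y, d) ∈ L ∪ U) ∨ (y = -d ∧ d ∈ C ∧ ¬ HasUp U d)) ∧ c' ≤ d := by
  induction h using Relation.TransGen.head_induction_on with
  | single hyc =>
    rename_i a
    have ha : (a, c') ∈ (PhiB n (C, L, U)).2 := hyc
    rcases arc_tgt hT ha with ⟨h1, h2, hcp⟩ | ⟨d, hd, hL, _⟩
    · rw [mem_consecPairsZ] at hcp
      obtain ⟨hx, _, hlt, _⟩ := hcp
      rcases Finset.mem_insert.1 hx with he | hxR
      · omega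
      · exact ⟨c', Or.inl (mem_colRowsB.1 hxR), le_refl _⟩
    · exact absurd hc' ((f_cell hT (Finset.mem_union_left _ hL)).2.2.1
        (by have := (C_pos hT hc').1; omega))
  | head hyz htz ih =>
    rename_i a z
    have haz : (a, z) ∈ (PhiB n (C, L, U)).2 := hyz
    obtain ⟨d', hd', hc'd'⟩ := ih
    rcases arc_tgt hT haz with ⟨h1, h2, _⟩ | ⟨e, he, hzL, hcol⟩
    · -- z ∈ C has an outgoing arc: impossible
      exfalso
      obtain ⟨w, harc, _⟩ := Relation.TransGen.head'_iff.1 htz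
      exact arc_src_notC hT harc h1
    · have hd'e : d' ≤ e := by
        rcases hd' with harr | ⟨hze, hdC, _⟩
        · exact L_max hT hzL harr
        · have h5 := (f_cell hT (Finset.mem_union_left _ hzL)).2.1
          rw [hze, abs_neg, abs_of_pos (by have := (C_pos hT hdC).1; omega)] at h5
          omega
      rcases hcol with ⟨hupe, hcp⟩ | ⟨hupe, hae⟩
      · rw [mem_consecPairsZ] at hcp
        obtain ⟨hx, _, hlt, _⟩ := hcp
        rcases Finset.mem_insert.1 hx with rfl | hxR
        · -- a = e, but a < z ≤ |z| < e
          exfalso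
          have h5 := (f_cell hT (Finset.mem_union_left _ hzL)).2.1
          have h6 : z < a := lt_of_abs_lt h5
          omega
        · exact ⟨e, Or.inl (mem_colRowsB.1 hxR), by omega⟩
      · exact ⟨e, Or.inr ⟨hae, he, hupe⟩, by omega⟩

end Forward4
end PB

namespace PB
section Forward5

variable {n : ℕ} {C : Finset ℤ} {L U : Finset (ℤ × ℤ)}

lemma CposF_phi (hT : IsATB n C L U) :
    CposF n (PhiB n (C, L, U)).2 = C.filter (fun c => HasUp U c) := by
  ext c
  rw [CposF, Finset.mem_filter, Finset.mem_filter, Finset.mem_Icc]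
  constructor
  · rintro ⟨⟨h1, h2⟩, hlegal⟩
    exact (legal_iff hT h1 h2).1 hlegal
  · rintro ⟨hcC, hup⟩
    obtain ⟨h1, h2⟩ := C_pos hT hcC
    exact ⟨⟨h1, h2⟩, (legal_iff hT h1 h2).2 ⟨hcC, hup⟩⟩

lemma L_not_Cpos (hT : IsATB n C L U) {y c : ℤ} (hyL : (y, c) ∈ L) :
    y ∉ CposF n (PhiB n (C, L, U)).2 := by
  rw [CposF_phi hT, Finset.mem_filter]
  rintro ⟨hyC, _⟩
  exact (f_cell hT (Finset.mem_union_left _ hyL)).2.2.1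
    (by have := (C_pos hT hyC).1; omega) hyC

lemma colF (hT : IsATB n C L U) {y c : ℤ} (hyL : (y, c) ∈ L) :
    col n (PhiB n (C, L, U)).2 y = c := by
  have hcell := f_cell hT (Finset.mem_union_left _ hyL)
  have hcC : c ∈ C := hcell.1
  have hyac : |y| < c := hcell.2.1
  apply col_eq_of (L_not_Cpos hT hyL)
  · -- c ∈ colSet
    by_cases hup : HasUp U c
    · apply Finset.mem_union_left
      rw [Finset.mem_filter, CposF_phi hT, Finset.mem_filter]
      exact ⟨⟨hcC, hup⟩, reach_colv hT (Finset.mem_union_left _ hyL) hup⟩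
    · apply Finset.mem_union_right
      rw [Finset.mem_image]
      refine ⟨(-c, y), ?_, by simp⟩
      rw [Finset.mem_filter]
      exact ⟨memA.2 ⟨c, hcC, Or.inr ⟨hup, rfl,
        mem_colRowsB.2 (Finset.mem_union_left _ hyL)⟩⟩, rfl⟩
  · intro z hz
    rcases Finset.mem_union.1 hz with hz | hz
    · rw [Finset.mem_filter, CposF_phi hT, Finset.mem_filter] at hz
      obtain ⟨⟨hzC, hzup⟩, hreach⟩ := hz
      obtain ⟨d, hd, hzd⟩ := reach_bound hT hreach hzC hzup
      rcases hd with harr | ⟨hyd, hdC, _⟩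
      · exact le_trans hzd (L_max hT hyL harr)
      · have : d ≤ |y| := by rw [hyd, abs_neg]; exact le_abs_self d
        omega
    · rw [Finset.mem_image] at hz
      obtain ⟨p, hp, rfl⟩ := hz
      rw [Finset.mem_filter] at hp
      obtain ⟨hpA, hp2⟩ := hp
      rcases arc_tgt hT (show (p.1, p.2) ∈ _ by rwa [Prod.mk.eta]) with
          ⟨h1, _, _⟩ | ⟨e, he, hLe, hcol⟩
      · rw [hp2] at h1
        exact absurd h1 (hcell.2.2.1 (by have := (C_pos hT h1).1; omega))
      · rw [hp2] at hLe
        have hec : e = c := L_unique hT hLe hyL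
        subst hec
        rcases hcol with ⟨hupe, hcp⟩ | ⟨_, hpe⟩
        · rw [mem_consecPairsZ] at hcp
          obtain ⟨hx, _, hlt, _⟩ := hcp
          rw [hp2] at hlt
          have hy1 := le_abs_self y
          have hy2 := abs_nonneg y
          rcases Finset.mem_insert.1 hx with hxe | hxR
          · omega
          · have h7 := row_abs hT hxR
            have h8 := neg_abs_le p.1
            omega
        · rw [hpe]; omega

lemma U_unique (hT : IsATB n C L U) {u u' c : ℤ} (h : (u, c) ∈ U) (h' : (u', c) ∈ U) :
    u = u' := by
  by_contra hne
  rcases lt_or_gt_of_ne hne with hlt | hlt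
  · exact hT.2.2.2.2.1 (u', c) h' u hlt (Finset.mem_union_right _ h)
  · exact hT.2.2.2.2.1 (u, c) h u' hlt (Finset.mem_union_right _ h')

lemma col_upC (hT : IsATB n C L U) {c : ℤ} (hcC : c ∈ C) (hup : HasUp U c) :
    col n (PhiB n (C, L, U)).2 c = c := by
  rw [col, if_pos]
  rw [CposF_phi hT, Finset.mem_filter]
  exact ⟨hcC, hup⟩

/-- membership in the class of an up column `c` -/
lemma mem_cls_iff (hT : IsATB n C L U) {c : ℤ} (hcC : c ∈ C) (hup : HasUp U c) {y : ℤ} :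
    y ∈ cls n (PhiB n (C, L, U)).2 c ↔ y = c ∨ (y, c) ∈ L := by
  rw [cls, Finset.mem_filter, mem_tgts]
  constructor
  · rintro ⟨⟨x, hx⟩, hcol⟩
    rcases arc_tgt hT hx with ⟨h1, h2, _⟩ | ⟨e, he, hLe, _⟩
    · left; rw [← hcol, col_upC hT h1 h2]
    · right; rwa [← hcol, colF hT hLe]
  · rintro (rfl | hyL)
    · obtain ⟨x, hx, _⟩ := upcol_arc hT hcC hup
      exact ⟨⟨x, hx⟩, col_upC hT hcC hup⟩
    · obtain ⟨x, hx⟩ := L_target hT hyL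
      exact ⟨⟨x, hx⟩, colF hT hyL⟩

lemma psrc_mcls (hT : IsATB n C L U) {c u : ℤ} (hcC : c ∈ C) (hu : (u, c) ∈ U) :
    psrc (PhiB n (C, L, U)).2 (mcls n (PhiB n (C, L, U)).2 c) = u := by
  have hup : HasUp U c := ⟨(u, c), hu, rfl⟩
  obtain ⟨u', hu', hu'R, humin, hother⟩ := up_min hT hup
  have huu : u' = u := U_unique hT hu' hu
  have hne : (cls n (PhiB n (C, L, U)).2 c).Nonempty :=
    ⟨c, (mem_cls_iff hT hcC hup).2 (Or.inl rfl)⟩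
  have hm : mcls n (PhiB n (C, L, U)).2 c = (cls n (PhiB n (C, L, U)).2 c).min' hne := by
    rw [mcls, dif_pos hne]
  rw [hm]
  have hmmem : (cls n (PhiB n (C, L, U)).2 c).min' hne ∈ cls n (PhiB n (C, L, U)).2 c :=
    Finset.min'_mem _ hne
  generalize hmdef : (cls n (PhiB n (C, L, U)).2 c).min' hne = m at hmmem
  have hmle : ∀ y ∈ cls n (PhiB n (C, L, U)).2 c, m ≤ y := by
    intro y hy; rw [← hmdef]; exact Finset.min'_le _ y hy
  have hmcases := (mem_cls_iff hT hcC hup).1 hmmem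
  have hmc : m ≤ c := hmle c ((mem_cls_iff hT hcC hup).2 (Or.inl rfl))
  have hum : u' < m := by
    rcases hmcases with he | hmL
    · rw [he]; exact lt_of_abs_lt (row_abs hT hu'R)
    · have hne2 : m ≠ u' := fun he => Finset.disjoint_left.1 hT.2.1 (he ▸ hmL) hu'
      exact lt_of_le_of_ne (humin m (mem_colRowsB.2 (Finset.mem_union_left _ hmL))) (Ne.symm hne2)
  have hmS : m ∈ insert c (colRowsB L U c) := by
    rcases hmcases with he | hmL
    · rw [he]; exact Finset.mem_insert_self _ _
    · exact Finset.mem_insert_of_mem (mem_colRowsB.2 (Finset.mem_union_left _ hmL))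
  have harc : (u', m) ∈ (PhiB n (C, L, U)).2 := by
    rw [memA]
    refine ⟨c, hcC, Or.inl ⟨hup, ?_⟩⟩
    apply consec_of_maxbelow (Finset.mem_insert_of_mem hu'R) hmS hum
    intro k hk hkm
    by_contra huk
    push_neg at huk
    have hkR : k ∈ colRowsB L U c := by
      rcases Finset.mem_insert.1 hk with he | h'
      · exact absurd he (by omega)
      · exact h'
    have hkL : (k, c) ∈ L := hother k hkR (by omega)
    have := hmle k ((mem_cls_iff hT hcC hup).2 (Or.inr hkL))
    omega
  rw [psrc_eq (tgt_unique hT) harc]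
  exact huu

/-- `Ψ ∘ Φ = id` on type B alternative tableaux -/
lemma psi_phi (hT : IsATB n C L U) : PsiB n (PhiB n (C, L, U)) = (C, L, U) := by
  have hCpos := CposF_phi hT
  have hnegV : ∀ i : ℤ, 1 ≤ i →
      ((-i) ∈ (PhiB n (C, L, U)).1 ↔ (i ∈ C ∧ ¬ HasUp U i)) := by
    intro i hi
    rw [memV]
    constructor
    · rintro (⟨h1, _, _⟩ | ⟨h1, _⟩ | ⟨c, hc, hup, he⟩)
      · omega
      · have := (C_pos hT h1).1; omega
      · have : c = i := by omega
        subst this; exact ⟨hc, hup⟩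
    · rintro ⟨h1, h2⟩
      exact Or.inr (Or.inr ⟨i, h1, h2, rfl⟩)
  refine Prod.ext ?_ (Prod.ext ?_ ?_)
  · -- C component
    show CposF n (PhiB n (C, L, U)).2 ∪
        (Finset.Icc (1 : ℤ) (n : ℤ)).filter (fun c => -c ∈ (PhiB n (C, L, U)).1) = C
    rw [hCpos]
    have : (Finset.Icc (1 : ℤ) (n : ℤ)).filter (fun c => -c ∈ (PhiB n (C, L, U)).1) =
        C.filter (fun c => ¬ HasUp U c) := by
      ext c
      rw [Finset.mem_filter, Finset.mem_filter, Finset.mem_Icc]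
      constructor
      · rintro ⟨⟨h1, h2⟩, hmem⟩
        exact (hnegV c h1).1 hmem
      · rintro ⟨hcC, hup⟩
        obtain ⟨h1, h2⟩ := C_pos hT hcC
        exact ⟨⟨h1, h2⟩, (hnegV c h1).2 ⟨hcC, hup⟩⟩
    rw [this, Finset.filter_union_filter_not_eq]
  · -- L component
    show ((tgts (PhiB n (C, L, U)).2).filter (fun y => y ∉ CposF n (PhiB n (C, L, U)).2)).image
        (fun y => (y, col n (PhiB n (C, L, U)).2 y)) = L
    ext ⟨y, c⟩
    rw [Finset.mem_image]
    constructor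
    · rintro ⟨z, hz, heq⟩
      rw [Finset.mem_filter, mem_tgts] at hz
      obtain ⟨⟨x, hx⟩, hzCpos⟩ := hz
      obtain ⟨rfl, rfl⟩ : z = y ∧ col n (PhiB n (C, L, U)).2 z = c := by
        constructor
        · exact congrArg Prod.fst heq
        · exact congrArg Prod.snd heq
      rcases arc_tgt hT hx with ⟨h1, h2, _⟩ | ⟨e, he, hLe, _⟩
      · exfalso
        apply hzCpos
        rw [hCpos, Finset.mem_filter]
        exact ⟨h1, h2⟩
      · rwa [colF hT hLe]
    · intro hyc
      refine ⟨y, ?_, by rw [colF hT hyc]⟩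
      rw [Finset.mem_filter, mem_tgts]
      exact ⟨L_target hT hyc, L_not_Cpos hT hyc⟩
  · -- U component
    show (CposF n (PhiB n (C, L, U)).2).image
        (fun c => (psrc (PhiB n (C, L, U)).2 (mcls n (PhiB n (C, L, U)).2 c), c)) = U
    rw [hCpos]
    ext ⟨u, c⟩
    rw [Finset.mem_image]
    constructor
    · rintro ⟨c', hc', heq⟩
      rw [Finset.mem_filter] at hc'
      obtain ⟨hcC, hup⟩ := hc'
      obtain ⟨u', hu'⟩ : ∃ u', (u', c') ∈ U := by
        obtain ⟨p, hp, hp2⟩ := hup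
        exact ⟨p.1, by rwa [show (p.1, c') = p by rw [← hp2]]⟩
      have h1 := psrc_mcls hT hcC hu'
      have h2 : c' = c := congrArg Prod.snd heq
      have h3 : psrc (PhiB n (C, L, U)).2 (mcls n (PhiB n (C, L, U)).2 c') = u :=
        congrArg Prod.fst heq
      rw [h1] at h3
      rw [← h2, ← h3]
      exact hu'
    · intro huU
      have hcC : c ∈ C := (f_cell hT (Finset.mem_union_right _ huU)).1
      have hup : HasUp U c := ⟨(u, c), huU, rfl⟩
      refine ⟨c, Finset.mem_filter.2 ⟨hcC, hup⟩, ?_⟩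
      rw [psrc_mcls hT hcC huU]

end Forward5
end PB

namespace PB
section Forward6

variable {n : ℕ} {C : Finset ℤ} {L U : Finset (ℤ × ℤ)}

lemma mem_rowsB {x : ℤ} : x ∈ rowsB n C ↔
    (1 ≤ x ∧ x ≤ (n : ℤ) ∧ x ∉ C) ∨ (∃ c ∈ C, x = -c) := by
  rw [rowsB, Finset.mem_union, Finset.mem_sdiff, Finset.mem_Icc, Finset.mem_image]
  constructor
  · rintro (⟨⟨h1, h2⟩, h3⟩ | ⟨c, hc, he⟩)
    · exact Or.inl ⟨h1, h2, h3⟩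
    · exact Or.inr ⟨c, hc, he.symm⟩
  · rintro (⟨h1, h2, h3⟩ | ⟨c, hc, he⟩)
    · exact Or.inl ⟨⟨h1, h2⟩, h3⟩
    · exact Or.inr ⟨c, hc, he.symm⟩

lemma stats (hT : IsATB n C L U) :
    (rowsB n C).filter (fun x => (∀ p ∈ L, p.1 ≠ x) ∧ ∀ p ∈ U, p.2 ≠ |x|) =
      (PhiB n (C, L, U)).1.filter (fun v => ∀ p ∈ (PhiB n (C, L, U)).2, p.2 ≠ v) := by
  ext x
  rw [Finset.mem_filter, Finset.mem_filter]
  constructor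
  · rintro ⟨hrow, hL, hU⟩
    rcases mem_rowsB.1 hrow with ⟨h1, h2, h3⟩ | ⟨c, hc, he⟩
    · refine ⟨memV.2 (Or.inl ⟨h1, h2, h3⟩), ?_⟩
      rintro p hp rfl
      rcases arc_tgt hT (show (p.1, p.2) ∈ _ by rwa [Prod.mk.eta]) with
          ⟨hC, _, _⟩ | ⟨e, he', hLe, _⟩
      · exact h3 hC
      · exact hL (p.2, e) hLe rfl
    · have hc1 := (C_pos hT hc).1
      have habs : |x| = c := by rw [he, abs_neg, abs_of_pos (by omega)]
      have hup : ¬ HasUp U c := by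
        rintro ⟨p, hp, hp2⟩
        exact hU p hp (by rw [hp2, habs])
      refine ⟨memV.2 (Or.inr (Or.inr ⟨c, hc, hup, he⟩)), ?_⟩
      rintro p hp rfl
      rcases arc_tgt hT (show (p.1, p.2) ∈ _ by rwa [Prod.mk.eta]) with
          ⟨hC, _, _⟩ | ⟨e, he', hLe, _⟩
      · have := (C_pos hT hC).1; omega
      · exact hL (p.2, e) hLe rfl
  · rintro ⟨hV, hnoin⟩
    rcases memV.1 hV with ⟨h1, h2, h3⟩ | ⟨hC, hup⟩ | ⟨c, hc, hup, he⟩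
    · refine ⟨mem_rowsB.2 (Or.inl ⟨h1, h2, h3⟩), ?_, ?_⟩
      · rintro p hp rfl
        obtain ⟨z, hz⟩ := L_target hT (show (p.1, p.2) ∈ L by rwa [Prod.mk.eta])
        exact hnoin (z, p.1) hz rfl
      · intro p hp habs
        have : p.2 ∈ C := (f_cell hT (Finset.mem_union_right _ hp)).1
        rw [habs, abs_of_pos (by omega)] at this
        exact h3 this
    · exfalso
      obtain ⟨z, hz, _⟩ := upcol_arc hT hC hup
      exact hnoin (z, x) hz rfl
    · have hc1 := (C_pos hT hc).1
      refine ⟨mem_rowsB.2 (Or.inr ⟨c, hc, he⟩), ?_, ?_⟩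
      · rintro p hp rfl
        obtain ⟨z, hz⟩ := L_target hT (show (p.1, p.2) ∈ L by rwa [Prod.mk.eta])
        exact hnoin (z, p.1) hz rfl
      · intro p hp habs
        apply hup
        refine ⟨p, hp, ?_⟩
        rw [habs, he, abs_neg, abs_of_pos (by omega)]

end Forward6
end PB

namespace PB
section Backward1

variable {n : ℕ} {V : Finset ℤ} {A : Finset (ℤ × ℤ)}

lemma lpb_lt (hP : IsLPB n V A) : ∀ p ∈ A, p.1 < p.2 := fun p hp => (hP.2.2.1 p hp).2.2

lemma not_both (hP : IsLPB n V A) {v : ℤ} (h1 : v ∈ V) (h2 : -v ∈ V) : False := by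
  have ha := hP.1 v h1
  rcases abs_cases v with ⟨he, _⟩ | ⟨he, _⟩ <;>
    rcases hP.2.1 |v| (Finset.mem_Icc.2 ha) with ⟨hi, hni⟩ | ⟨hni, hi⟩
  · rw [he] at hni; exact hni h2
  · rw [he] at hi; exact hi h1
  · rw [he, neg_neg] at hni
    exact hni h1
  · rw [he] at hi
    exact hi h2

lemma tgt_arc (hP : IsLPB n V A) {y : ℤ} (hy : y ∈ tgts A) : (psrc A y, y) ∈ A := by
  obtain ⟨x, hx⟩ := mem_tgts.1 hy
  rw [psrc_eq hP.2.2.2 hx]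
  exact hx

lemma mem_CposF {c : ℤ} : c ∈ CposF n A ↔ (1 ≤ c ∧ c ≤ (n : ℤ)) ∧ IsLegalDestB A c := by
  rw [CposF, Finset.mem_filter, Finset.mem_Icc]

lemma Cpos_noout {c z : ℤ} (hc : c ∈ CposF n A) (h : (c, z) ∈ A) : False :=
  (mem_CposF.1 hc).2.2 (c, z) h rfl

lemma Cpos_tgt {c : ℤ} (hc : c ∈ CposF n A) : c ∈ tgts A := by
  obtain ⟨p, hp, hp2, _⟩ := (mem_CposF.1 hc).2.1
  exact mem_tgts.2 ⟨p.1, by rwa [show (p.1, c) = p by rw [← hp2]]⟩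

lemma Cpos_V (hP : IsLPB n V A) {c : ℤ} (hc : c ∈ CposF n A) : c ∈ V :=
  (hP.2.2.1 _ (tgt_arc hP (Cpos_tgt hc))).2.1

lemma reach_lt (hP : IsLPB n V A) {x y : ℤ} (h : Relation.TransGen (Arc A) x y) : x < y :=
  tg_lt (lpb_lt hP) h

lemma reach_V (hP : IsLPB n V A) {x y : ℤ} (h : Relation.TransGen (Arc A) x y) : y ∈ V := by
  obtain ⟨p, _, hpy⟩ := Relation.TransGen.tail'_iff.1 h
  exact (hP.2.2.1 _ hpy).2.1

lemma maxreach (hP : IsLPB n V A) {y z : ℤ} (hy : 0 < y) (hz : (y, z) ∈ A) :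
    ∃ c ∈ CposF n A, Relation.TransGen (Arc A) y c := by
  have hne : (V.filter (fun w => Relation.TransGen (Arc A) y w)).Nonempty :=
    ⟨z, Finset.mem_filter.2 ⟨(hP.2.2.1 _ hz).2.1, Relation.TransGen.single hz⟩⟩
  set m := (V.filter (fun w => Relation.TransGen (Arc A) y w)).max' hne with hm
  have hmmem := Finset.max'_mem _ hne
  rw [Finset.mem_filter] at hmmem
  obtain ⟨hmV, hmr⟩ := hmmem
  refine ⟨m, ?_, hmr⟩
  have hnoout : ∀ w, (m, w) ∈ A → False := by
    intro w hw
    have hwr : Relation.TransGen (Arc A) y w := hmr.tail hw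
    have : w ≤ m := Finset.le_max' _ w (Finset.mem_filter.2 ⟨(hP.2.2.1 _ hw).2.1, hwr⟩)
    have := lpb_lt hP _ hw
    simp only at this
    omega
  obtain ⟨p, hpr, hpm⟩ := Relation.TransGen.tail'_iff.1 hmr
  have hpy : y ≤ p := rtg_le (lpb_lt hP) hpr
  have hpm' : p < m := lpb_lt hP _ hpm
  have hmabs := hP.1 m hmV
  rw [abs_of_pos (by omega)] at hmabs
  rw [mem_CposF]
  refine ⟨⟨by omega, hmabs.2⟩, ⟨(p, m), hpm, rfl, ?_⟩, ?_⟩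
  · rw [abs_of_pos (by omega), abs_of_pos (by omega)]
    exact hpm'
  · rintro q hq hq1
    apply hnoout q.2
    rw [← hq1, Prod.mk.eta]
    exact hq

end Backward1
end PB

namespace PB
section Backward2

variable {n : ℕ} {V : Finset ℤ} {A : Finset (ℤ × ℤ)}

lemma colSet_src {x y : ℤ} (hx : (x, y) ∈ A) : -x ∈ colSet n A y := by
  apply Finset.mem_union_right
  rw [Finset.mem_image]
  exact ⟨(x, y), Finset.mem_filter.2 ⟨hx, rfl⟩, rfl⟩

lemma col_spec (hP : IsLPB n V A) {x y : ℤ} (hx : (x, y) ∈ A) (hy : y ∉ CposF n A) :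
    (col n A y ∈ CposF n A ∧ Relation.TransGen (Arc A) y (col n A y)) ∨ col n A y = -x := by
  have hne : (colSet n A y).Nonempty := ⟨-x, colSet_src hx⟩
  have hmem := col_mem_colSet hy hne
  rcases Finset.mem_union.1 hmem with h | h
  · rw [Finset.mem_filter] at h
    exact Or.inl h
  · rw [Finset.mem_image] at h
    obtain ⟨p, hp, he⟩ := h
    rw [Finset.mem_filter] at hp
    right
    rw [← he]
    have : p.1 = x := hP.2.2.2 p hp.1 (x, y) hx hp.2
    rw [this]

lemma col_gt (hP : IsLPB n V A) {x y : ℤ} (hx : (x, y) ∈ A) (hy : y ∉ CposF n A) :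
    y < col n A y := by
  rcases col_spec hP hx hy with ⟨_, hr⟩ | he
  · exact reach_lt hP hr
  · have hyV : y ∈ V := (hP.2.2.1 _ hx).2.1
    have hxV : x ∈ V := (hP.2.2.1 _ hx).1
    have hxy : x < y := lpb_lt hP _ hx
    have hyabs := hP.1 y hyV
    rcases lt_trichotomy y 0 with hneg | hzero | hpos
    · omega
    · exfalso; rw [hzero] at hyabs; simp at hyabs
    · -- y positive
      by_cases hcase : y < -x
      · omega
      · exfalso
        push_neg at hcase
        have hyIcc : 1 ≤ y ∧ y ≤ (n : ℤ) := by
          rw [abs_of_pos hpos] at hyabs; exact hyabs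
        have hnl : ¬ IsLegalDestB A y := by
          intro hl
          exact hy (mem_CposF.2 ⟨hyIcc, hl⟩)
        rw [IsLegalDestB, not_and_or] at hnl
        rcases hnl with hnl | hnl
        · push_neg at hnl
          have h5 := hnl (x, y) hx rfl
          simp only at h5
          rw [abs_of_pos hpos] at h5
          have hxeq : x = -y := by
            rcases abs_cases x with ⟨ha, _⟩ | ⟨ha, _⟩ <;> omega
          apply not_both hP hyV
          rw [← hxeq]; exact hxV
        · push_neg at hnl
          obtain ⟨q, hq, hq1⟩ := hnl
          obtain ⟨c, hc, hreach⟩ := maxreach hP (show 0 < y by omega)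
            (show (y, q.2) ∈ A by rw [← hq1, Prod.mk.eta]; exact hq)
          have h1 : c ≤ col n A y := le_col hy
            (Finset.mem_union_left _ (Finset.mem_filter.2 ⟨hc, hreach⟩))
          have h2 : y < c := reach_lt hP hreach
          omega

lemma col_neg_src (hP : IsLPB n V A) {x y : ℤ} (hx : (x, y) ∈ A) (hy : y ∉ CposF n A)
    (he : col n A y = -x) : x < 0 := by
  have hg := col_gt hP hx hy
  have hxy : x < y := lpb_lt hP _ hx
  by_contra h
  push_neg at h
  have hxV : x ∈ V := (hP.2.2.1 _ hx).1
  have := hP.1 x hxV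
  rcases abs_cases x with ⟨ha, _⟩ | ⟨ha, _⟩ <;> omega

lemma col_bounds (hP : IsLPB n V A) {x y : ℤ} (hx : (x, y) ∈ A) (hy : y ∉ CposF n A) :
    1 ≤ col n A y ∧ col n A y ≤ (n : ℤ) := by
  rcases col_spec hP hx hy with ⟨hc, _⟩ | he
  · exact (mem_CposF.1 hc).1
  · have hxneg := col_neg_src hP hx hy he
    have hxV : x ∈ V := (hP.2.2.1 _ hx).1
    have := hP.1 x hxV
    rw [abs_of_neg hxneg] at this
    omega

lemma col_neg_tgt (hP : IsLPB n V A) {x y : ℤ} (hx : (x, y) ∈ A) (hy : y ∉ CposF n A) :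
    -y < col n A y := by
  have h1 : -x ≤ col n A y := le_col hy (colSet_src hx)
  have := lpb_lt hP _ hx
  simp only at this
  omega

/-- positive non-`Cpos` targets are not column labels of either kind -/
lemma tgt_pos_notC (hP : IsLPB n V A) {x y : ℤ} (hx : (x, y) ∈ A) (hy : y ∉ CposF n A)
    (hpos : 0 < y) : y ∉ CposF n A ∧ -y ∉ V := by
  refine ⟨hy, fun h => not_both hP ((hP.2.2.1 _ hx).2.1) h⟩

end Backward2
end PB

namespace PB
section Backward3

variable {n : ℕ} {V : Finset ℤ} {A : Finset (ℤ × ℤ)}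

lemma mem_cls {c y : ℤ} : y ∈ cls n A c ↔ y ∈ tgts A ∧ col n A y = c := by
  rw [cls, Finset.mem_filter]

lemma col_Cpos {c : ℤ} (hc : c ∈ CposF n A) : col n A c = c := by
  rw [col, if_pos hc]

lemma Cpos_mem_cls {c : ℤ} (hc : c ∈ CposF n A) : c ∈ cls n A c :=
  mem_cls.2 ⟨Cpos_tgt hc, col_Cpos hc⟩

lemma cls_notCpos (hP : IsLPB n V A) {c y : ℤ} (hy : y ∈ cls n A c) (hne : y ≠ c) :
    y ∉ CposF n A := by
  intro h
  exact hne ((col_Cpos h).symm.trans (mem_cls.1 hy).2)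

lemma cls_reach (hP : IsLPB n V A) {c y : ℤ} (hc : c ∈ CposF n A) (hy : y ∈ cls n A c)
    (hne : y ≠ c) : Relation.TransGen (Arc A) y c := by
  obtain ⟨hyt, hycol⟩ := mem_cls.1 hy
  have hyC := cls_notCpos hP hy hne
  rcases col_spec hP (tgt_arc hP hyt) hyC with ⟨_, hr⟩ | he
  · rwa [hycol] at hr
  · exfalso
    rw [hycol] at he
    refine not_both hP (Cpos_V hP hc) ?_
    rw [he, neg_neg]
    exact (hP.2.2.1 _ (tgt_arc hP hyt)).1

lemma cls_le (hP : IsLPB n V A) {c y : ℤ} (hc : c ∈ CposF n A) (hy : y ∈ cls n A c) :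
    y ≤ c := by
  by_cases hne : y = c
  · omega
  · exact le_of_lt (reach_lt hP (cls_reach hP hc hy hne))

/-- **key step**: consecutive members of a class are joined by an arc -/
lemma src_consec (hP : IsLPB n V A) {c u v : ℤ} (hc : c ∈ CposF n A)
    (hu : u ∈ cls n A c) (hv : v ∈ cls n A c) (huv : u < v)
    (hcons : ∀ z ∈ cls n A c, ¬(u < z ∧ z < v)) : (u, v) ∈ A := by
  have hvc : v ≤ c := cls_le hP hc hv
  have huc : u < c := by omega
  have hvr : Relation.ReflTransGen (Arc A) v c := by
    by_cases hne : v = c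
    · rw [hne]
    · exact (cls_reach hP hc hv hne).to_reflTransGen
  have hur : Relation.TransGen (Arc A) u c := cls_reach hP hc hu (by omega)
  have huCpos : u ∉ CposF n A := cls_notCpos hP hu (by omega)
  have hcomp := rtg_comparable hP.2.2.2 hur.to_reflTransGen hvr
  have huvr : Relation.ReflTransGen (Arc A) u v := by
    rcases hcomp with h | h
    · exact h
    · exact absurd (rtg_le (lpb_lt hP) h) (by omega)
  obtain ⟨p, hup, hpv⟩ := rtg_last huvr (by omega)
  by_cases hpu : p = u
  · rwa [← hpu]
  exfalso
  have hulp : u < p := lt_of_le_of_ne (rtg_le (lpb_lt hP) hup) (Ne.symm hpu)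
  -- descending induction
  have main : ∀ k : ℕ, ∀ z, Relation.ReflTransGen (Arc A) u z →
      Relation.ReflTransGen (Arc A) z p → u < z → (z - u).toNat ≤ k → False := by
    intro k
    induction k with
    | zero => intro z _ _ h1 h2; omega
    | succ k ih =>
      intro z huz hzp hulz hk
      obtain ⟨q, huq, hqz⟩ := rtg_last huz (by omega)
      have hreach_c : Relation.TransGen (Arc A) z c :=
        Relation.TransGen.trans_right hzp
          (Relation.TransGen.trans_left (Relation.TransGen.single hpv) hvr)
      have hzCpos : z ∉ CposF n A := by
        intro h
        obtain ⟨w, hw, _⟩ := Relation.TransGen.head'_iff.1 hreach_c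
        exact Cpos_noout h hw
      have hclez : c ≤ col n A z := le_col hzCpos
        (Finset.mem_union_left _ (Finset.mem_filter.2 ⟨hc, hreach_c⟩))
      have hzv : z < v := by
        have h1 : z ≤ p := rtg_le (lpb_lt hP) hzp
        have h2 : p < v := lpb_lt hP _ hpv
        omega
      rcases eq_or_lt_of_le hclez with hcol | hcol
      · -- z is in the class: contradicts consecutiveness
        exact hcons z (mem_cls.2 ⟨mem_tgts.2 ⟨q, hqz⟩, hcol.symm⟩) ⟨hulz, hzv⟩
      · rcases col_spec hP hqz hzCpos with ⟨hcc, hcr⟩ | he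
        · -- col z reachable: contradicts col u = c
          have : Relation.TransGen (Arc A) u (col n A z) :=
            Relation.TransGen.trans_right huz hcr
          have h1 : col n A z ≤ col n A u := le_col huCpos
            (Finset.mem_union_left _ (Finset.mem_filter.2 ⟨hcc, this⟩))
          have h2 : col n A u = c := (mem_cls.1 hu).2
          omega
        · -- col z = -q
          have hqneg : q < 0 := col_neg_src hP hqz hzCpos he
          by_cases hqu : q = u
          · -- col z = -u > c but -u < col u = c
            have hut : u ∈ tgts A := (mem_cls.1 hu).1
            have h1 : -u < col n A u := col_neg_tgt hP (tgt_arc hP hut) huCpos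
            have h2 : col n A u = c := (mem_cls.1 hu).2
            omega
          · have hulq : u < q := lt_of_le_of_ne (rtg_le (lpb_lt hP) huq) (Ne.symm hqu)
            have hqlz : q < z := lpb_lt hP _ hqz
            exact ih q huq (Relation.ReflTransGen.head hqz hzp) hulq (by omega)
  exact main (p - u).toNat p hup Relation.ReflTransGen.refl hulp le_rfl

end Backward3
end PB

namespace PB

noncomputable def Cres (n : ℕ) (V : Finset ℤ) (A : Finset (ℤ × ℤ)) : Finset ℤ :=
  CposF n A ∪ (Finset.Icc (1 : ℤ) (n : ℤ)).filter (fun c => -c ∈ V)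

noncomputable def Lres (n : ℕ) (A : Finset (ℤ × ℤ)) : Finset (ℤ × ℤ) :=
  ((tgts A).filter (fun y => y ∉ CposF n A)).image (fun y => (y, col n A y))

noncomputable def Ures (n : ℕ) (A : Finset (ℤ × ℤ)) : Finset (ℤ × ℤ) :=
  (CposF n A).image (fun c => (psrc A (mcls n A c), c))

lemma PsiB_eq {n : ℕ} {V : Finset ℤ} {A : Finset (ℤ × ℤ)} :
    PsiB n (V, A) = (Cres n V A, Lres n A, Ures n A) := rfl

section Backward4

variable {n : ℕ} {V : Finset ℤ} {A : Finset (ℤ × ℤ)}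

lemma mem_Lres {y d : ℤ} :
    (y, d) ∈ Lres n A ↔ y ∈ tgts A ∧ y ∉ CposF n A ∧ d = col n A y := by
  rw [Lres, Finset.mem_image]
  constructor
  · rintro ⟨z, hz, he⟩
    rw [Finset.mem_filter] at hz
    obtain ⟨h1, h2⟩ := hz
    obtain ⟨rfl, rfl⟩ : z = y ∧ col n A z = d :=
      ⟨congrArg Prod.fst he, congrArg Prod.snd he⟩
    exact ⟨h1, h2, rfl⟩
  · rintro ⟨h1, h2, rfl⟩
    exact ⟨y, Finset.mem_filter.2 ⟨h1, h2⟩, rfl⟩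

lemma mem_Ures {x d : ℤ} :
    (x, d) ∈ Ures n A ↔ d ∈ CposF n A ∧ x = psrc A (mcls n A d) := by
  rw [Ures, Finset.mem_image]
  constructor
  · rintro ⟨c, hc, he⟩
    obtain ⟨rfl, rfl⟩ : psrc A (mcls n A c) = x ∧ c = d :=
      ⟨congrArg Prod.fst he, congrArg Prod.snd he⟩
    exact ⟨hc, rfl⟩
  · rintro ⟨h1, rfl⟩
    exact ⟨d, h1, rfl⟩

lemma hasUp_Ures {d : ℤ} : HasUp (Ures n A) d ↔ d ∈ CposF n A := by
  constructor
  · rintro ⟨p, hp, rfl⟩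
    exact (mem_Ures.1 (show (p.1, p.2) ∈ _ by rwa [Prod.mk.eta])).1
  · intro h
    exact ⟨(psrc A (mcls n A d), d), mem_Ures.2 ⟨h, rfl⟩, rfl⟩

lemma mcls_mem (hc : (cls n A c).Nonempty) : mcls n A c ∈ cls n A c := by
  rw [mcls, dif_pos hc]; exact Finset.min'_mem _ hc

lemma mcls_min (hc : (cls n A c).Nonempty) {y : ℤ} (hy : y ∈ cls n A c) :
    mcls n A c ≤ y := by
  rw [mcls, dif_pos hc]; exact Finset.min'_le _ y hy

lemma cls_ne {c : ℤ} (hc : c ∈ CposF n A) : (cls n A c).Nonempty := ⟨c, Cpos_mem_cls hc⟩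

/-- the "up-arrow row" of an up column: facts -/
lemma i1_facts (hP : IsLPB n V A) {c : ℤ} (hc : c ∈ CposF n A) :
    (psrc A (mcls n A c), mcls n A c) ∈ A ∧ psrc A (mcls n A c) < mcls n A c ∧
      psrc A (mcls n A c) ∉ cls n A c ∧ -(psrc A (mcls n A c)) < c ∧ mcls n A c ≤ c := by
  have hm := mcls_mem (cls_ne hc)
  have harc : (psrc A (mcls n A c), mcls n A c) ∈ A := tgt_arc hP (mem_cls.1 hm).1
  have hlt : psrc A (mcls n A c) < mcls n A c := lpb_lt hP _ harc
  have hnotcls : psrc A (mcls n A c) ∉ cls n A c := by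
    intro h
    exact absurd (mcls_min (cls_ne hc) h) (by omega)
  have hmc : mcls n A c ≤ c := cls_le hP hc hm
  refine ⟨harc, hlt, hnotcls, ?_, hmc⟩
  by_cases hmCpos : mcls n A c ∈ CposF n A
  · -- then mcls c = c, and legality bounds the source
    have he : mcls n A c = c := by
      have := (col_Cpos hmCpos).symm.trans (mem_cls.1 hm).2
      omega
    obtain ⟨⟨hc1, hc2⟩, ⟨p, hp, hp2, hpabs⟩, _⟩ := mem_CposF.1 hc
    have : p.1 = psrc A (mcls n A c) := by
      rw [he]
      rw [hP.2.2.2 p hp (psrc A c, c) (he ▸ harc) (by rw [hp2])]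
    rw [this] at hpabs
    rw [abs_of_pos (show (0:ℤ) < c by omega)] at hpabs
    have := neg_le_abs (psrc A (mcls n A c))
    omega
  · have h1 : -(psrc A (mcls n A c)) ≤ col n A (mcls n A c) :=
      le_col hmCpos (colSet_src harc)
    have h2 : col n A (mcls n A c) = c := (mem_cls.1 hm).2
    rcases eq_or_lt_of_le h1 with he | hlt2
    · exfalso
      apply not_both hP (Cpos_V hP hc)
      have : psrc A (mcls n A c) = -c := by omega
      rw [← this]
      exact (hP.2.2.1 _ harc).1
    · omega

lemma psiB_isATB (hP : IsLPB n V A) : IsATB n (Cres n V A) (Lres n A) (Ures n A) := by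
  have hC1 : Cres n V A ⊆ Finset.Icc (1 : ℤ) (n : ℤ) := by
    intro c hc
    rcases Finset.mem_union.1 hc with h | h
    · exact Finset.mem_Icc.2 (mem_CposF.1 h).1
    · exact (Finset.mem_filter.1 h).1
  have hCposC : CposF n A ⊆ Cres n V A := Finset.subset_union_left
  have hnegC : ∀ c : ℤ, 1 ≤ c → c ≤ (n : ℤ) → -c ∈ V → c ∈ Cres n V A := by
    intro c h1 h2 h3
    exact Finset.mem_union_right _ (Finset.mem_filter.2 ⟨Finset.mem_Icc.2 ⟨h1, h2⟩, h3⟩)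
  -- cells of L' ∪ U'
  have hcells : ∀ p ∈ Lres n A ∪ Ures n A, p.2 ∈ Cres n V A ∧
      ((1 ≤ p.1 ∧ p.1 ≤ (n : ℤ) ∧ p.1 ∉ Cres n V A ∧ p.1 < p.2) ∨
        (p.1 < 0 ∧ -p.1 ∈ Cres n V A ∧ -p.1 < p.2)) := by
    rintro ⟨r, d⟩ hp
    rcases Finset.mem_union.1 hp with h | h
    · obtain ⟨hrt, hrC, rfl⟩ := mem_Lres.1 h
      have harc := tgt_arc hP hrt
      have hrV : r ∈ V := (hP.2.2.1 _ harc).2.1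
      have hrabs := hP.1 r hrV
      constructor
      · -- col r ∈ Cres
        rcases col_spec hP harc hrC with ⟨h1, _⟩ | he
        · exact hCposC h1
        · have hneg := col_neg_src hP harc hrC he
          have hsV : psrc A r ∈ V := (hP.2.2.1 _ harc).1
          have hsabs := hP.1 _ hsV
          rw [abs_of_neg hneg] at hsabs
          apply hnegC _ (by omega) (by omega)
          rw [he, neg_neg]
          exact hsV
      · rcases lt_trichotomy r 0 with hneg | hzero | hpos
        · right
          refine ⟨hneg, ?_, col_neg_tgt hP harc hrC⟩
          apply hnegC _ (by omega) (by rw [abs_of_neg hneg] at hrabs; omega)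
          rw [neg_neg]; exact hrV
        · exfalso; rw [hzero] at hrabs; simp at hrabs
        · left
          rw [abs_of_pos hpos] at hrabs
          refine ⟨by omega, by omega, ?_, col_gt hP harc hrC⟩
          intro hmem
          rcases Finset.mem_union.1 hmem with h' | h'
          · exact hrC h'
          · exact not_both hP hrV (Finset.mem_filter.1 h').2
    · obtain ⟨hd, rfl⟩ := mem_Ures.1 h
      obtain ⟨harc, hlt, hnotcls, hneglt, hmc⟩ := i1_facts hP hd
      have hsV : psrc A (mcls n A d) ∈ V := (hP.2.2.1 _ harc).1
      have hsabs := hP.1 _ hsV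
      refine ⟨hCposC hd, ?_⟩
      rcases lt_trichotomy (psrc A (mcls n A d)) 0 with hneg | hzero | hpos
      · right
        refine ⟨hneg, ?_, hneglt⟩
        apply hnegC _ (by omega) (by rw [abs_of_neg hneg] at hsabs; omega)
        rw [neg_neg]; exact hsV
      · exfalso; rw [hzero] at hsabs; simp at hsabs
      · left
        rw [abs_of_pos hpos] at hsabs
        refine ⟨by omega, by omega, ?_, by omega⟩
        intro hmem
        rcases Finset.mem_union.1 hmem with h' | h'
        · exact Cpos_noout h' harc
        · exact not_both hP hsV (Finset.mem_filter.1 h').2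
  refine ⟨hC1, ?_, hcells, ?_, ?_, ?_⟩
  · -- disjoint
    rw [Finset.disjoint_left]
    rintro ⟨y, d⟩ hL hU
    obtain ⟨hyt, hyC, rfl⟩ := mem_Lres.1 hL
    obtain ⟨hd, hy⟩ := mem_Ures.1 hU
    have hycls : y ∈ cls n A (col n A y) := mem_cls.2 ⟨hyt, rfl⟩
    have h2 := (i1_facts hP hd).2.2.1
    rw [← hy] at h2
    exact h2 hycls
  · -- left arrow condition
    rintro ⟨y, d⟩ hL c' hdc' hmem
    simp only at hdc'
    obtain ⟨hyt, hyC, rfl⟩ := mem_Lres.1 hL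
    rcases Finset.mem_union.1 hmem with h | h
    · obtain ⟨_, _, he⟩ := mem_Lres.1 h
      simp only at he
      omega
    · obtain ⟨hc', hy⟩ := mem_Ures.1 h
      obtain ⟨harc, hlt, _, _, hmc⟩ := i1_facts hP hc'
      rw [← hy] at harc
      -- y reaches c' so c' ≤ col y
      have hreach : Relation.TransGen (Arc A) y c' := by
        by_cases he : mcls n A c' = c'
        · exact Relation.TransGen.single (he ▸ harc)
        · exact (Relation.TransGen.single harc).trans
            (cls_reach hP hc' (mcls_mem (cls_ne hc')) he)
      have : c' ≤ col n A y := le_col hyC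
        (Finset.mem_union_left _ (Finset.mem_filter.2 ⟨hc', hreach⟩))
      omega
  · -- up arrow condition
    rintro ⟨x, d⟩ hU x' hx' hmem
    simp only at hx'
    obtain ⟨hd, rfl⟩ := mem_Ures.1 hU
    rcases Finset.mem_union.1 hmem with h | h
    · obtain ⟨hxt, hxC, he⟩ := mem_Lres.1 (show (x', d) ∈ Lres n A from h)
      have : x' ∈ cls n A d := mem_cls.2 ⟨hxt, he.symm⟩
      have h1 := mcls_min (cls_ne hd) this
      have h2 := (i1_facts hP hd).2.1
      omega
    · obtain ⟨_, he⟩ := mem_Ures.1 (show (x', d) ∈ Ures n A from h)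
      omega
  · -- no-arrows in row `-c` for up columns
    rintro i hi hup c' hmem
    have hiC : i ∈ CposF n A := by
      obtain ⟨p, hp, hp2⟩ := hup
      have := mem_Ures.1 (show (p.1, i) ∈ Ures n A by rwa [← hp2, Prod.mk.eta])
      exact this.1
    have hiV : i ∈ V := Cpos_V hP hiC
    rcases Finset.mem_union.1 hmem with h | h
    · obtain ⟨ht, _, _⟩ := mem_Lres.1 h
      exact not_both hP hiV (hP.2.2.1 _ (tgt_arc hP ht)).2.1
    · obtain ⟨hc', he⟩ := mem_Ures.1 h
      apply not_both hP hiV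
      rw [he]
      exact (hP.2.2.1 _ (i1_facts hP hc').1).1
end Backward4
end PB

namespace PB
section Backward5

variable {n : ℕ} {V : Finset ℤ} {A : Finset (ℤ × ℤ)}

lemma mem_colRows_res {r c : ℤ} : r ∈ colRowsB (Lres n A) (Ures n A) c ↔
    ((r ∈ tgts A ∧ r ∉ CposF n A ∧ col n A r = c) ∨
      (c ∈ CposF n A ∧ r = psrc A (mcls n A c))) := by
  rw [mem_colRowsB, Finset.mem_union, mem_Lres, mem_Ures]
  constructor
  · rintro (⟨h1, h2, h3⟩ | h)
    · exact Or.inl ⟨h1, h2, h3.symm⟩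
    · exact Or.inr h
  · rintro (⟨h1, h2, h3⟩ | h)
    · exact Or.inl ⟨h1, h2, h3.symm⟩
    · exact Or.inr h

lemma cls_mem_S (hP : IsLPB n V A) {c z : ℤ} (hz : z ∈ cls n A c) :
    z ∈ insert c (colRowsB (Lres n A) (Ures n A) c) := by
  by_cases he : z = c
  · rw [he]; exact Finset.mem_insert_self _ _
  · exact Finset.mem_insert_of_mem (mem_colRows_res.2
      (Or.inl ⟨(mem_cls.1 hz).1, cls_notCpos hP hz he, (mem_cls.1 hz).2⟩))

lemma consec_pair_char (hP : IsLPB n V A) {c y : ℤ} (hc : c ∈ CposF n A)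
    (hy : y ∈ cls n A c) :
    (psrc A y, y) ∈ consecPairsZ (insert c (colRowsB (Lres n A) (Ures n A) c)) := by
  have harc : (psrc A y, y) ∈ A := tgt_arc hP (mem_cls.1 hy).1
  have hxy : psrc A y < y := lpb_lt hP _ harc
  have hyc : y ≤ c := cls_le hP hc hy
  have hi1 := i1_facts hP hc
  have hmle : ∀ {z : ℤ}, z ∈ cls n A c → mcls n A c ≤ z := fun hz => mcls_min (cls_ne hc) hz
  by_cases hym : y = mcls n A c
  · -- first arc of the chain
    rw [mem_consecPairsZ]
    refine ⟨Finset.mem_insert_of_mem (mem_colRows_res.2 (Or.inr ⟨hc, by rw [hym]⟩)),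
      cls_mem_S hP hy, hxy, ?_⟩
    intro k hk ⟨hk1, hk2⟩
    rcases Finset.mem_insert.1 hk with rfl | hkR
    · omega
    · rcases mem_colRows_res.1 hkR with ⟨h1, h2, h3⟩ | ⟨_, h4⟩
      · have : mcls n A c ≤ k := hmle (mem_cls.2 ⟨h1, h3⟩)
        omega
      · rw [← hym] at h4
        omega
  · -- later arc: the source is the previous class element
    have hmy : mcls n A c < y :=
      lt_of_le_of_ne (hmle hy) (Ne.symm hym)
    have hne : ((cls n A c).filter (fun z => z < y)).Nonempty :=
      ⟨mcls n A c, Finset.mem_filter.2 ⟨mcls_mem (cls_ne hc), hmy⟩⟩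
    obtain ⟨u', hu'cls, hu'y, hu'max⟩ :
        ∃ u', u' ∈ cls n A c ∧ u' < y ∧ ∀ z ∈ cls n A c, z < y → z ≤ u' := by
      have h1 := Finset.max'_mem _ hne
      rw [Finset.mem_filter] at h1
      refine ⟨((cls n A c).filter (fun z => z < y)).max' hne, h1.1, h1.2, ?_⟩
      intro z hz hzy
      have hm : z ∈ (cls n A c).filter (fun w => w < y) := Finset.mem_filter.2 ⟨hz, hzy⟩
      exact Finset.le_max' _ z hm
    have harc' : (u', y) ∈ A := by
      apply src_consec hP hc hu'cls hy hu'y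
      intro z hz hcon
      have : z ≤ u' := hu'max z hz hcon.2
      have := hcon.1
      omega
    have hxu : psrc A y = u' := by rw [psrc_eq hP.2.2.2 harc']
    rw [mem_consecPairsZ, hxu]
    refine ⟨cls_mem_S hP hu'cls, cls_mem_S hP hy, hu'y, ?_⟩
    intro k hk ⟨hk1, hk2⟩
    rcases Finset.mem_insert.1 hk with rfl | hkR
    · omega
    · rcases mem_colRows_res.1 hkR with ⟨h1, h2, h3⟩ | ⟨_, h4⟩
      · have : k ≤ u' := hu'max k (mem_cls.2 ⟨h1, h3⟩) hk2
        omega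
      · -- k = i1 < mcls ≤ u'
        have h5 := hmle hu'cls
        have h6 := hi1.2.1
        omega

lemma phi_psi_arcs (hP : IsLPB n V A) : (PhiB n (PsiB n (V, A))).2 = A := by
  rw [PsiB_eq]
  ext ⟨x, y⟩
  rw [memA]
  constructor
  · rintro ⟨c, hcC, ⟨hup, hcp⟩ | ⟨hup, rfl, hyR⟩⟩
    · have hc : c ∈ CposF n A := hasUp_Ures.1 hup
      have hi1 := i1_facts hP hc
      have hycls : y ∈ cls n A c := by
        have hcp' := mem_consecPairsZ.1 hcp
        obtain ⟨hxS, hyS, hxy, _⟩ := hcp'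
        rcases Finset.mem_insert.1 hyS with rfl | hyR
        · exact Cpos_mem_cls hc
        · rcases mem_colRows_res.1 hyR with ⟨h1, h2, h3⟩ | ⟨_, h4⟩
          · exact mem_cls.2 ⟨h1, h3⟩
          · -- y would be the up row; but something smaller is in S
            exfalso
            have hmc : mcls n A c ≤ c := hi1.2.2.2.2
            rcases Finset.mem_insert.1 hxS with rfl | hxR
            · omega
            · rcases mem_colRows_res.1 hxR with ⟨h1', h2', h3'⟩ | ⟨_, h4'⟩
              · have := mcls_min (cls_ne (A := A) hc) (mem_cls.2 ⟨h1', h3'⟩)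
                omega
              · omega
      have := consec_pair_char hP hc hycls
      have hx : x = psrc A y := consec_left_unique hcp this
      rw [hx]
      exact tgt_arc hP (mem_cls.1 hycls).1
    · have hc : c ∉ CposF n A := fun h => hup (hasUp_Ures.2 h)
      rcases mem_colRows_res.1 hyR with ⟨h1, h2, h3⟩ | ⟨h4, _⟩
      · have harc := tgt_arc hP h1
        rcases col_spec hP harc h2 with ⟨hcc, _⟩ | he
        · rw [h3] at hcc; exact absurd hcc hc
        · rw [h3] at he
          rw [show -c = psrc A y by omega]
          exact harc
      · exact absurd h4 hc
  · intro hxy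
    have hyt : y ∈ tgts A := mem_tgts.2 ⟨x, hxy⟩
    have hx : psrc A y = x := psrc_eq hP.2.2.2 hxy
    by_cases hd : col n A y ∈ CposF n A
    · refine ⟨col n A y, Finset.mem_union_left _ hd, Or.inl ⟨hasUp_Ures.2 hd, ?_⟩⟩
      have := consec_pair_char hP hd (mem_cls.2 ⟨hyt, rfl⟩)
      rwa [hx] at this
    · have hyC : y ∉ CposF n A := by
        intro h
        rw [col_Cpos h] at hd
        exact hd h
      rcases col_spec hP hxy hyC with ⟨hcc, _⟩ | he
      · exact absurd hcc hd
      · have hb := col_bounds hP hxy hyC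
        have hxV : x ∈ V := (hP.2.2.1 _ hxy).1
        refine ⟨col n A y, Finset.mem_union_right _ (Finset.mem_filter.2
          ⟨Finset.mem_Icc.2 hb, by rw [he, neg_neg]; exact hxV⟩),
          Or.inr ⟨fun h => hd (hasUp_Ures.1 h), by omega, ?_⟩⟩
        exact mem_colRows_res.2 (Or.inl ⟨hyt, hyC, rfl⟩)

lemma phi_psi_V (hP : IsLPB n V A) : (PhiB n (PsiB n (V, A))).1 = V := by
  rw [PsiB_eq]
  ext v
  rw [memV]
  constructor
  · rintro (⟨h1, h2, h3⟩ | ⟨h1, h2⟩ | ⟨c, hc, hup, rfl⟩)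
    · rcases hP.2.1 v (Finset.mem_Icc.2 ⟨h1, h2⟩) with ⟨hv, _⟩ | ⟨hnv, _⟩
      · exact hv
      · exfalso
        apply h3
        apply Finset.mem_union_right
        rw [Finset.mem_filter, Finset.mem_Icc]
        exact ⟨⟨h1, h2⟩, hnv⟩
    · exact Cpos_V hP (hasUp_Ures.1 h2)
    · rcases Finset.mem_union.1 hc with h | h
      · exact absurd (hasUp_Ures.2 h) hup
      · exact (Finset.mem_filter.1 h).2
  · intro hv
    have habs := hP.1 v hv
    rcases lt_trichotomy v 0 with hneg | hzero | hpos
    · right; right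
      refine ⟨-v, ?_, ?_, by rw [neg_neg]⟩
      · apply Finset.mem_union_right
        refine Finset.mem_filter.2 ⟨Finset.mem_Icc.2 ?_, by rwa [neg_neg]⟩
        rw [abs_of_neg hneg] at habs
        omega
      · intro h
        exact not_both hP (Cpos_V hP (hasUp_Ures.1 h)) (by rwa [neg_neg])
    · exfalso; rw [hzero] at habs; simp at habs
    · rw [abs_of_pos hpos] at habs
      by_cases hC : v ∈ CposF n A
      · exact Or.inr (Or.inl ⟨Finset.mem_union_left _ hC, hasUp_Ures.2 hC⟩)
      · left
        refine ⟨by omega, habs.2, ?_⟩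
        intro h
        rcases Finset.mem_union.1 h with h' | h'
        · exact hC h'
        · exact not_both hP hv (Finset.mem_filter.1 h').2

lemma phi_psi (hP : IsLPB n V A) : PhiB n (PsiB n (V, A)) = (V, A) :=
  Prod.ext (phi_psi_V hP) (phi_psi_arcs hP)

end Backward5
end PB

namespace PB

lemma mem_ATB {n : ℕ} {T : Finset ℤ × Finset (ℤ × ℤ) × Finset (ℤ × ℤ)} :
    T ∈ ATB n ↔ IsATB n T.1 T.2.1 T.2.2 := by
  rw [ATB, Finset.mem_filter]
  constructor
  · exact fun h => h.2
  · intro h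
    refine ⟨?_, h⟩
    rw [Finset.mem_product, Finset.mem_product, Finset.mem_powerset, Finset.mem_powerset,
      Finset.mem_powerset]
    have hcell : ∀ p ∈ T.2.1 ∪ T.2.2,
        p ∈ Finset.Icc (-(n : ℤ)) (n : ℤ) ×ˢ Finset.Icc (1 : ℤ) (n : ℤ) := by
      intro p hp
      obtain ⟨h2, hca⟩ := h.2.2.1 p hp
      have hbound := h.1 h2
      rw [Finset.mem_Icc] at hbound
      rw [Finset.mem_product, Finset.mem_Icc, Finset.mem_Icc]
      rcases hca with ⟨ha, hb, _, _⟩ | ⟨ha, hb, _⟩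
      · exact ⟨⟨by omega, by omega⟩, by omega⟩
      · have := h.1 hb
        rw [Finset.mem_Icc] at this
        exact ⟨⟨by omega, by omega⟩, by omega⟩
    exact ⟨h.1, fun p hp => hcell p (Finset.mem_union_left _ hp),
      fun p hp => hcell p (Finset.mem_union_right _ hp)⟩

lemma mem_LPB {n : ℕ} {P : Finset ℤ × Finset (ℤ × ℤ)} :
    P ∈ LPB n ↔ IsLPB n P.1 P.2 := by
  rw [LPB, Finset.mem_filter]
  constructor
  · exact fun h => h.2
  · intro h
    refine ⟨?_, h⟩
    rw [Finset.mem_product, Finset.mem_powerset, Finset.mem_powerset]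
    have hV : ∀ v ∈ P.1, v ∈ Finset.Icc (-(n : ℤ)) (n : ℤ) := by
      intro v hv
      have := h.1 v hv
      rw [Finset.mem_Icc]
      rcases abs_cases v with ⟨he, _⟩ | ⟨he, _⟩ <;> omega
    refine ⟨hV, ?_⟩
    intro p hp
    obtain ⟨h1, h2, _⟩ := h.2.2.1 p hp
    rw [Finset.mem_product]
    exact ⟨hV _ h1, hV _ h2⟩

lemma triple_eta (T : Finset ℤ × Finset (ℤ × ℤ) × Finset (ℤ × ℤ)) :
    (T.1, T.2.1, T.2.2) = T := rfl

end PB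

theorem PhiB_bijection' (n : ℕ) :
    Set.BijOn (PhiB n) (ATB n : Set _) (LPB n : Set _) ∧
    ∀ T ∈ ATB n,
      (rowsB n T.1).filter
          (fun x => (∀ p ∈ T.2.1, p.1 ≠ x) ∧ ∀ p ∈ T.2.2, p.2 ≠ |x|) =
        (PhiB n T).1.filter (fun v => ∀ p ∈ (PhiB n T).2, p.2 ≠ v) := by
  constructor
  · refine ⟨?_, ?_, ?_⟩
    · -- MapsTo
      intro T hT
      rw [Finset.mem_coe, PB.mem_ATB] at hT
      have := PB.phi_mem_LPB hT
      rw [PB.triple_eta] at this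
      exact Finset.mem_coe.2 this
    · -- InjOn
      intro T hT T' hT' he
      rw [Finset.mem_coe, PB.mem_ATB] at hT hT'
      have h1 := PB.psi_phi hT
      have h2 := PB.psi_phi hT'
      rw [PB.triple_eta] at h1 h2
      rw [← h1, ← h2, he]
    · -- SurjOn
      intro P hP
      rw [Finset.mem_coe, PB.mem_LPB] at hP
      refine ⟨PB.PsiB n P, ?_, ?_⟩
      · rw [Finset.mem_coe, PB.mem_ATB]
        exact PB.psiB_isATB hP
      · exact PB.phi_psi hP
  · -- statistics
    intro T hT
    rw [PB.mem_ATB] at hT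
    have := PB.stats hT
    rwa [PB.triple_eta] at this

/-- the map `Φ_B` is a bijection from type B alternative
tableaux of size `n` onto type B linked partitions of `{1,…,n}`; moreover
the labels of the unrestricted rows of `T` are exactly the labels of the
origins and singletons of `Φ_B(T)`. -/
theorem PhiB_bijection (n : ℕ) :
    Set.BijOn (PhiB n) (ATB n : Set _) (LPB n : Set _) ∧
    ∀ T ∈ ATB n,
      (rowsB n T.1).filter
          (fun x => (∀ p ∈ T.2.1, p.1 ≠ x) ∧ ∀ p ∈ T.2.2, p.2 ≠ |x|) =
        (PhiB n T).1.filter (fun v => ∀ p ∈ (PhiB n T).2, p.2 ≠ v) := by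
  exact PhiB_bijection' n
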